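/- arXiv:1501.07131 — 5 statements merged into one kernel-verified Lean document; each statement's English description precedes it below -/
import Mathlib

section
/- Every solvable consensus game acceptor admits a winning strategy implementable by a nondeterministic linear-bounded automaton. -/
/-! ## Consensus game acceptors (Berwanger–van den Bogaard).
A consensus game acceptor over an observation alphabet `Γ` is a finite graph
with an initial state, two observation labellings, and a nonempty set of
admissible decisions at each final (sink) state. -/
structure CGame (Γ : Type) where
  V : Type
  fintypeV : Fintype V
  E : V → V → Prop
  init : V
  β1 : V → Γ
  β2 : V → Γ
  Ω : V → Set Bool
  Ω_ne : ∀ v, (∀ u, ¬ E v u) → (Ω v).Nonempty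

namespace CGame

variable {Γ : Type} (G : CGame Γ)

/-- A final state has no outgoing transition. -/
def IsFinal (v : G.V) : Prop := ∀ u, ¬ G.E v u

/-- A play is a path `v₀ v₁ … v_{n+1}` from the initial state to a final state. -/
def IsPlay (π : List G.V) : Prop :=
  2 ≤ π.length ∧ π.head? = some G.init ∧ List.Chain' G.E π ∧
    ∀ v, π.getLast? = some v → G.IsFinal v

/-- Observation sequence of player 1 (interior states only). -/
def obs1 (π : List G.V) : List Γ := ((π.drop 1).dropLast).map G.β1

/-- Observation sequence of player 2 (interior states only). -/
def obs2 (π : List G.V) : List Γ := ((π.drop 1).dropLast).map G.β2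

/-- Admissible decisions `Ω(π)` at (the final state of) a play. -/
def OmegaP (π : List G.V) : Set Bool := {a | ∃ v, π.getLast? = some v ∧ a ∈ G.Ω v}

/-- Plays indistinguishable to player 1: `π ∼¹ π'`. -/
def Ind1 (π π' : List G.V) : Prop := G.IsPlay π ∧ G.IsPlay π' ∧ G.obs1 π = G.obs1 π'

/-- Plays indistinguishable to player 2: `π ∼² π'`. -/
def Ind2 (π π' : List G.V) : Prop := G.IsPlay π ∧ G.IsPlay π' ∧ G.obs2 π = G.obs2 π'

/-- Connected plays: `π ∼* π'` (alternating chains of `∼¹` and `∼²`). -/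
def Connected : List G.V → List G.V → Prop :=
  Relation.ReflTransGen (fun π π' => G.Ind1 π π' ∨ G.Ind2 π π')

/-- A (state-based) strategy of player 1: invariant under `∼¹`. -/
def Strategy1 (s : List G.V → Bool) : Prop := ∀ π π', G.Ind1 π π' → s π = s π'

/-- A (state-based) strategy of player 2: invariant under `∼²`. -/
def Strategy2 (s : List G.V → Bool) : Prop := ∀ π π', G.Ind2 π π' → s π = s π'

/-- A joint strategy is winning if on every play the two decisions agree and
are admissible. -/
def JointWinning (s1 s2 : List G.V → Bool) : Prop :=
  G.Strategy1 s1 ∧ G.Strategy2 s2 ∧ ∀ π, G.IsPlay π → s1 π = s2 π ∧ s1 π ∈ G.OmegaP π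

/-- A game is solvable if it admits a joint winning strategy. -/
def Solvable : Prop := ∃ s1 s2, G.JointWinning s1 s2

/-- An observation-based strategy `t : Γ* → Bool` of player 1 is winning if it is
the first component of a joint winning strategy. -/
def ObsWinning (t : List Γ → Bool) : Prop :=
  ∃ t2 : List Γ → Bool, G.JointWinning (fun π => t (G.obs1 π)) (fun π => t2 (G.obs2 π))

/-- A decision `a` is safe at a play `π` if it is admissible at every connected play. -/
def Safe (a : Bool) (π : List G.V) : Prop :=
  ∀ π', G.IsPlay π' → G.Connected π π' → a ∈ G.OmegaP π'

/-- Seed relation: pairs of observation sequences of the two players on plays. -/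
def seedRel : Set (List Γ × List Γ) :=
  {p | ∃ π, G.IsPlay π ∧ p.1 = G.obs1 π ∧ p.2 = G.obs2 π}

/-- Seed language `L_acc`: player-1 observations of plays with `Ω(π) = {1}`. -/
def LaccSet : Set (List Γ) := {w | ∃ π, G.IsPlay π ∧ G.obs1 π = w ∧ G.OmegaP π = {true}}

/-- Seed language `L_rej`: player-1 observations of plays with `Ω(π) = {0}`. -/
def LrejSet : Set (List Γ) := {w | ∃ π, G.IsPlay π ∧ G.obs1 π = w ∧ G.OmegaP π = {false}}

end CGame

/-- Words over the subalphabet `S`. -/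
def WordsIn {Γ : Type} (S : Set Γ) : Set (List Γ) := {w | ∀ a ∈ w, a ∈ S}

/-- `G` covers `L` over the terminal alphabet `S`: `G` is solvable, some winning
strategy defines exactly `L` on `S`-words, and every winning strategy accepts `L`. -/
def CGame.Covers {Γ : Type} (G : CGame Γ) (S : Set Γ) (L : Set (List Γ)) : Prop :=
  G.Solvable ∧
  (∃ t, G.ObsWinning t ∧ ∀ w ∈ WordsIn S, (w ∈ L ↔ t w = true)) ∧
  (∀ t, G.ObsWinning t → ∀ w ∈ L, t w = true)

/-- `G` characterises `L` over `S`: solvable and every winning strategy defines `L`. -/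
def CGame.Characterises {Γ : Type} (G : CGame Γ) (S : Set Γ) (L : Set (List Γ)) : Prop :=
  G.Solvable ∧ ∀ t, G.ObsWinning t → ∀ w ∈ WordsIn S, (w ∈ L ↔ t w = true)

/-! ## Context-sensitive (noncontracting) grammars. -/

/-- One derivation step of a grammar with rule set `P`. -/
def GrammarStep {N T : Type} (P : Set (List (N ⊕ T) × List (N ⊕ T)))
    (u v : List (N ⊕ T)) : Prop :=
  ∃ x y l r, (l, r) ∈ P ∧ u = x ++ l ++ y ∧ v = x ++ r ++ y

/-- A language is context-sensitive if, apart from the empty word, it is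
generated by a finite noncontracting (monotone) grammar. -/
def ContextSensitive {T : Type} (L : Set (List T)) : Prop :=
  ∃ (N : Type) (_ : Finite N) (S : N) (P : Set (List (N ⊕ T) × List (N ⊕ T))),
    P.Finite ∧
    (∀ p ∈ P, p.1 ≠ [] ∧ p.1.length ≤ p.2.length ∧ ∃ x ∈ p.1, ∃ n : N, x = Sum.inl n) ∧
    ∀ w : List T, w ≠ [] →
      (w ∈ L ↔ Relation.ReflTransGen (GrammarStep P) [Sum.inl S] (w.map Sum.inr))

section Part1
namespace CGame
variable {Γ : Type} (G : CGame Γ)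

/-- The key semantic predicate: `π` is connected to a play forced to accept. -/
def Acc (π : List G.V) : Prop :=
  ∃ π', G.IsPlay π' ∧ G.Connected π π' ∧ G.OmegaP π' = {true}

lemma ind_symm : Symmetric (fun π π' => G.Ind1 π π' ∨ G.Ind2 π π') := by
  rintro π π' (⟨h1, h2, h3⟩ | ⟨h1, h2, h3⟩)
  · exact Or.inl ⟨h2, h1, h3.symm⟩
  · exact Or.inr ⟨h2, h1, h3.symm⟩

lemma connected_symm {π π' : List G.V} (h : G.Connected π π') : G.Connected π' π :=
  (@Relation.ReflTransGen.symmetric _ _ ⟨fun _ _ h => G.ind_symm h⟩).symm _ _ h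

lemma jointWinning_eq_on_connected {s1 s2 : List G.V → Bool}
    (hw : G.JointWinning s1 s2) {π π' : List G.V} (h : G.Connected π π') :
    s1 π = s1 π' := by
  induction h with
  | refl => rfl
  | tail _ hstep ih =>
    rcases hstep with hst | hst
    · exact ih.trans (hw.1 _ _ hst)
    · have e2 := hw.2.1 _ _ hst
      have ea := (hw.2.2 _ hst.1).1
      have eb := (hw.2.2 _ hst.2.1).1
      exact ih.trans (ea.trans (e2.trans eb.symm))

lemma omegaP_nonempty {π : List G.V} (hπ : G.IsPlay π) : (G.OmegaP π).Nonempty := by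
  rcases hπ with ⟨hlen, _, _, hfin⟩
  have hne : π ≠ [] := by intro h; simp [h] at hlen
  obtain ⟨v, hv⟩ : ∃ v, π.getLast? = some v :=
    ⟨π.getLast hne, List.getLast?_eq_getLast hne⟩
  obtain ⟨a, ha⟩ := G.Ω_ne v (hfin v hv)
  exact ⟨a, v, hv, ha⟩

lemma true_mem_of_acc (hsol : G.Solvable) {π : List G.V} (hπ : G.IsPlay π)
    (hacc : G.Acc π) : true ∈ G.OmegaP π := by
  obtain ⟨s1, s2, hw⟩ := hsol
  obtain ⟨π', hπ', hconn, hΩ⟩ := hacc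
  have h1 : s1 π = s1 π' := G.jointWinning_eq_on_connected hw hconn
  have h2 : s1 π' ∈ G.OmegaP π' := (hw.2.2 _ hπ').2
  rw [hΩ] at h2
  have : s1 π' = true := h2
  have h3 : s1 π ∈ G.OmegaP π := (hw.2.2 _ hπ).2
  rwa [h1, this] at h3

lemma false_mem_of_not_acc {π : List G.V} (hπ : G.IsPlay π)
    (hacc : ¬ G.Acc π) : false ∈ G.OmegaP π := by
  by_contra hf
  obtain ⟨a, ha⟩ := G.omegaP_nonempty hπ
  have hat : a = true := by
    cases a
    · exact absurd ha hf
    · rfl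
  subst hat
  apply hacc
  refine ⟨π, hπ, Relation.ReflTransGen.refl, ?_⟩
  ext b
  cases b
  · simp only [Set.mem_singleton_iff]
    exact ⟨fun hb => absurd hb hf, fun hb => by cases hb⟩
  · simpa using ha

lemma acc_congr1 {π π' : List G.V} (h1 : G.IsPlay π) (h2 : G.IsPlay π')
    (hobs : G.obs1 π = G.obs1 π') (ha : G.Acc π) : G.Acc π' := by
  obtain ⟨σ, hσ, hconn, hΩ⟩ := ha
  exact ⟨σ, hσ, Relation.ReflTransGen.head (Or.inl ⟨h2, h1, hobs.symm⟩) hconn, hΩ⟩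

lemma acc_congr2 {π π' : List G.V} (h1 : G.IsPlay π) (h2 : G.IsPlay π')
    (hobs : G.obs2 π = G.obs2 π') (ha : G.Acc π) : G.Acc π' := by
  obtain ⟨σ, hσ, hconn, hΩ⟩ := ha
  exact ⟨σ, hσ, Relation.ReflTransGen.head (Or.inr ⟨h2, h1, hobs.symm⟩) hconn, hΩ⟩

open Classical in
/-- The canonical observation-based strategy of player 1. -/
noncomputable def tacc (w : List Γ) : Bool :=
  if ∃ π, G.IsPlay π ∧ G.obs1 π = w ∧ G.Acc π then true else false

open Classical in
/-- The canonical observation-based strategy of player 2. -/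
noncomputable def tacc2 (w : List Γ) : Bool :=
  if ∃ π, G.IsPlay π ∧ G.obs2 π = w ∧ G.Acc π then true else false

lemma tacc_obs1 {π : List G.V} (hπ : G.IsPlay π) :
    G.tacc (G.obs1 π) = true ↔ G.Acc π := by
  classical
  unfold tacc
  by_cases h : G.Acc π
  · have hx : ∃ σ, G.IsPlay σ ∧ G.obs1 σ = G.obs1 π ∧ G.Acc σ := ⟨π, hπ, rfl, h⟩
    rw [if_pos hx]; simpa using h
  · rw [if_neg]
    · simpa using h
    rintro ⟨σ, hσ, hobs, ha⟩
    exact h (G.acc_congr1 hσ hπ hobs ha)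

lemma tacc2_obs2 {π : List G.V} (hπ : G.IsPlay π) :
    G.tacc2 (G.obs2 π) = true ↔ G.Acc π := by
  classical
  unfold tacc2
  by_cases h : G.Acc π
  · have hx : ∃ σ, G.IsPlay σ ∧ G.obs2 σ = G.obs2 π ∧ G.Acc σ := ⟨π, hπ, rfl, h⟩
    rw [if_pos hx]; simpa using h
  · rw [if_neg]
    · simpa using h
    rintro ⟨σ, hσ, hobs, ha⟩
    exact h (G.acc_congr2 hσ hπ hobs ha)

lemma tacc_obsWinning (hsol : G.Solvable) : G.ObsWinning G.tacc := by
  classical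
  refine ⟨G.tacc2, ?_, ?_, ?_⟩
  · intro π π' ⟨h1, h2, h3⟩; simp only [h3]
  · intro π π' ⟨h1, h2, h3⟩; simp only [h3]
  · intro π hπ
    simp only []
    by_cases h : G.Acc π
    · have e1 : G.tacc (G.obs1 π) = true := (G.tacc_obs1 hπ).mpr h
      have e2 : G.tacc2 (G.obs2 π) = true := (G.tacc2_obs2 hπ).mpr h
      rw [e1, e2]
      exact ⟨rfl, G.true_mem_of_acc hsol hπ h⟩
    · have e1 : G.tacc (G.obs1 π) = false := by
        cases e : G.tacc (G.obs1 π)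
        · rfl
        · exact absurd ((G.tacc_obs1 hπ).mp e) h
      have e2 : G.tacc2 (G.obs2 π) = false := by
        cases e : G.tacc2 (G.obs2 π)
        · rfl
        · exact absurd ((G.tacc2_obs2 hπ).mp e) h
      rw [e1, e2]
      exact ⟨rfl, G.false_mem_of_not_acc hπ h⟩

lemma tacc_true_iff (w : List Γ) :
    G.tacc w = true ↔ ∃ π, G.IsPlay π ∧ G.obs1 π = w ∧ G.Acc π := by
  classical
  unfold tacc
  by_cases h : ∃ π, G.IsPlay π ∧ G.obs1 π = w ∧ G.Acc π
  · simp [h]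
  · simp [h]

end CGame
end Part1
section Part2

instance optionFinite {α : Type} [Finite α] : Finite (Option α) := by
  haveI := Fintype.ofFinite α
  infer_instance

/-- Head states of the linear-bounded sweeping automaton, encoded in grammar cells. -/
inductive GHead (V : Type) : Type
  | gen : GHead V
  | back : GHead V
  | fin : GHead V
  | rw : Bool → V → GHead V

instance {V : Type} [Finite V] : Finite (GHead V) := by
  apply Finite.of_injective (fun h : GHead V =>
    (match h with
      | .gen => Sum.inl (false, false)
      | .back => Sum.inl (false, true)
      | .fin => Sum.inl (true, false)
      | .rw b v => Sum.inr (b, v) : (Bool × Bool) ⊕ (Bool × V)))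
  intro a b h
  cases a <;> cases b <;> simp_all

/-- A tape cell: current vertex, leftmost/rightmost flags, optional head. -/
structure GCell (V : Type) : Type where
  v : V
  left : Bool
  right : Bool
  head : Option (GHead V)

instance {V : Type} [Finite V] : Finite (GCell V) := by
  apply Finite.of_injective (fun c : GCell V => (c.v, c.left, c.right, c.head))
  rintro ⟨⟩ ⟨⟩ h
  simp_all

/-- Nonterminals: the axiom plus cells. -/
inductive GN (V : Type) : Type
  | start : GN V
  | cell : GCell V → GN V

instance {V : Type} [Finite V] : Finite (GN V) := by
  apply Finite.of_injective (fun c : GN V =>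
    (match c with | .start => none | .cell c => some c : Option (GCell V)))
  intro a b h
  cases a <;> cases b <;> simp_all

namespace CGame
variable {Γ : Type} (G : CGame Γ)

instance : Fintype G.V := G.fintypeV

/-- Symbols of the grammar. -/
abbrev GSym : Type := GN G.V ⊕ Γ

/-- A cell symbol. -/
def cellS (v : G.V) (l r : Bool) (h : Option (GHead G.V)) : G.GSym :=
  Sum.inl (GN.cell ⟨v, l, r, h⟩)

/-- `v` has an accepting final successor. -/
def AccEnd (v : G.V) : Prop := ∃ f, G.E v f ∧ G.IsFinal f ∧ G.Ω f = {true}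

/-- `v` has a final successor. -/
def FinEnd (v : G.V) : Prop := ∃ f, G.E v f ∧ G.IsFinal f

/-- Observation of player `b`. -/
def βb (b : Bool) (v : G.V) : Γ := bif b then G.β1 v else G.β2 v

/- The eleven rule schemas. -/
def rule1 (v : G.V) : List G.GSym × List G.GSym :=
  ([Sum.inl GN.start], [G.cellS v true true (some .back)])
def rule2 (v : G.V) : List G.GSym × List G.GSym :=
  ([Sum.inl GN.start], [G.cellS v true false (some .gen)])
def rule3 : G.V × G.V × Bool → List G.GSym × List G.GSym := fun q =>
  ([G.cellS q.1 q.2.2 false (some .gen)],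
   [G.cellS q.1 q.2.2 false none, G.cellS q.2.1 false false (some .gen)])
def rule4 : G.V × G.V × Bool → List G.GSym × List G.GSym := fun q =>
  ([G.cellS q.1 q.2.2 false (some .gen)],
   [G.cellS q.1 q.2.2 false none, G.cellS q.2.1 false true (some .back)])
def rule5 : G.V × G.V × Bool × Bool → List G.GSym × List G.GSym := fun q =>
  ([G.cellS q.1 q.2.2.1 false none, G.cellS q.2.1 false q.2.2.2 (some .back)],
   [G.cellS q.1 q.2.2.1 false (some .back), G.cellS q.2.1 false q.2.2.2 none])
def rule6 : G.V × Bool × Bool → List G.GSym × List G.GSym := fun q =>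
  ([G.cellS q.1 true q.2.1 (some .back)], [G.cellS q.1 true q.2.1 (some (.rw q.2.2 G.init))])
def rule7 : G.V × Bool → List G.GSym × List G.GSym := fun q =>
  ([G.cellS q.1 true q.2 (some .back)], [G.cellS q.1 true q.2 (some .fin)])
def rule8 : G.V × G.V × G.V × G.V × Bool × Bool × Bool → List G.GSym × List G.GSym :=
  fun q =>
  ([G.cellS q.1 q.2.2.2.2.1 false (some (.rw q.2.2.2.2.2.2 q.2.2.1)),
    G.cellS q.2.2.2.1 false q.2.2.2.2.2.1 none],
   [G.cellS q.2.1 q.2.2.2.2.1 false none,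
    G.cellS q.2.2.2.1 false q.2.2.2.2.2.1 (some (.rw q.2.2.2.2.2.2 q.2.1))])
def rule9 : G.V × G.V × G.V × Bool × Bool → List G.GSym × List G.GSym := fun q =>
  ([G.cellS q.1 q.2.2.2.1 true (some (.rw q.2.2.2.2 q.2.2.1))],
   [G.cellS q.2.1 q.2.2.2.1 true (some .back)])
def rule10 : G.V × G.V × Bool × Bool → List G.GSym × List G.GSym := fun q =>
  ([G.cellS q.1 q.2.2.1 false (some .fin), G.cellS q.2.1 false q.2.2.2 none],
   [Sum.inr (G.β1 q.1), G.cellS q.2.1 false q.2.2.2 (some .fin)])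
def rule11 : G.V × Bool → List G.GSym × List G.GSym := fun q =>
  ([G.cellS q.1 q.2 true (some .fin)], [Sum.inr (G.β1 q.1)])

/-- The rule set of the grammar. -/
def Rules : Set (List G.GSym × List G.GSym) :=
  {p | ∃ v, (G.E G.init v ∧ G.AccEnd v) ∧ p = G.rule1 v} ∪
  {p | ∃ v, G.E G.init v ∧ p = G.rule2 v} ∪
  {p | ∃ q, G.E q.1 q.2.1 ∧ p = G.rule3 q} ∪
  {p | ∃ q, (G.E q.1 q.2.1 ∧ G.AccEnd q.2.1) ∧ p = G.rule4 q} ∪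
  {p | ∃ q, True ∧ p = G.rule5 q} ∪
  {p | ∃ q, True ∧ p = G.rule6 q} ∪
  {p | ∃ q, True ∧ p = G.rule7 q} ∪
  {p | ∃ q, (G.E q.2.2.1 q.2.1 ∧ G.βb q.2.2.2.2.2.2 q.1 = G.βb q.2.2.2.2.2.2 q.2.1) ∧
      p = G.rule8 q} ∪
  {p | ∃ q, (G.E q.2.2.1 q.2.1 ∧ G.βb q.2.2.2.2 q.1 = G.βb q.2.2.2.2 q.2.1 ∧ G.FinEnd q.2.1) ∧
      p = G.rule9 q} ∪
  {p | ∃ q, True ∧ p = G.rule10 q} ∪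
  {p | ∃ q, True ∧ p = G.rule11 q}

lemma rules_finite : G.Rules.Finite := by
  haveI : Fintype G.V := G.fintypeV
  unfold Rules
  refine (((((((((Set.Finite.union ?_ ?_).union ?_).union ?_).union ?_).union ?_).union
    ?_).union ?_).union ?_).union ?_).union ?_
  · exact (Set.finite_range G.rule1).subset (by rintro p ⟨v, -, rfl⟩; exact ⟨v, rfl⟩)
  · exact (Set.finite_range G.rule2).subset (by rintro p ⟨v, -, rfl⟩; exact ⟨v, rfl⟩)
  · exact (Set.finite_range G.rule3).subset (by rintro p ⟨q, -, rfl⟩; exact ⟨q, rfl⟩)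
  · exact (Set.finite_range G.rule4).subset (by rintro p ⟨q, -, rfl⟩; exact ⟨q, rfl⟩)
  · exact (Set.finite_range G.rule5).subset (by rintro p ⟨q, -, rfl⟩; exact ⟨q, rfl⟩)
  · exact (Set.finite_range G.rule6).subset (by rintro p ⟨q, -, rfl⟩; exact ⟨q, rfl⟩)
  · exact (Set.finite_range G.rule7).subset (by rintro p ⟨q, -, rfl⟩; exact ⟨q, rfl⟩)
  · exact (Set.finite_range G.rule8).subset (by rintro p ⟨q, -, rfl⟩; exact ⟨q, rfl⟩)
  · exact (Set.finite_range G.rule9).subset (by rintro p ⟨q, -, rfl⟩; exact ⟨q, rfl⟩)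
  · exact (Set.finite_range G.rule10).subset (by rintro p ⟨q, -, rfl⟩; exact ⟨q, rfl⟩)
  · exact (Set.finite_range G.rule11).subset (by rintro p ⟨q, -, rfl⟩; exact ⟨q, rfl⟩)

lemma rules_format : ∀ p ∈ G.Rules, p.1 ≠ [] ∧ p.1.length ≤ p.2.length ∧
    ∃ x ∈ p.1, ∃ n : GN G.V, x = Sum.inl n := by
  rintro p ((((((((((⟨q,-,rfl⟩|⟨q,-,rfl⟩)|⟨q,-,rfl⟩)|⟨q,-,rfl⟩)|⟨q,-,rfl⟩)|⟨q,-,rfl⟩)|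
    ⟨q,-,rfl⟩)|⟨q,-,rfl⟩)|⟨q,-,rfl⟩)|⟨q,-,rfl⟩)|⟨q,-,rfl⟩) <;>
    exact ⟨by simp [rule1, rule2, rule3, rule4, rule5, rule6, rule7, rule8, rule9, rule10,
      rule11],
      by simp [rule1, rule2, rule3, rule4, rule5, rule6, rule7, rule8, rule9, rule10, rule11],
      _, List.mem_cons_self, _, rfl⟩

end CGame
end Part2
section Part3
namespace CGame
variable {Γ : Type} (G : CGame Γ)

/-- A plain cell at position `i` of a row of length `n`. -/
def cellP (n i : ℕ) (v : G.V) : G.GSym :=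
  G.cellS v (decide (i = 0)) (decide (i + 1 = n)) none

/-- A head cell at position `i` of a row of length `n`. -/
def cellH (n i : ℕ) (v : G.V) (h : GHead G.V) : G.GSym :=
  G.cellS v (decide (i = 0)) (decide (i + 1 = n)) (some h)

/-- Plain cells for `vs`, starting at position `i` of a row of length `n`. -/
def rowFrom (n : ℕ) : ℕ → List G.V → List G.GSym
  | _, [] => []
  | i, v :: vs => G.cellP n i v :: rowFrom n (i + 1) vs

@[simp] lemma rowFrom_nil {n i : ℕ} : G.rowFrom n i [] = [] := rfl

@[simp] lemma rowFrom_cons {n i : ℕ} {v : G.V} {vs : List G.V} :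
    G.rowFrom n i (v :: vs) = G.cellP n i v :: G.rowFrom n (i + 1) vs := rfl

/-- A full row with a head on the cell after `pre`. -/
def rowMid (n : ℕ) (pre : List G.V) (v : G.V) (h : GHead G.V) (suf : List G.V) :
    List G.GSym :=
  G.rowFrom n 0 pre ++ G.cellH n pre.length v h :: G.rowFrom n (pre.length + 1) suf

/-- The terminal word corresponding to interior `vs`. -/
def termRow (vs : List G.V) : List G.GSym := vs.map (fun v => Sum.inr (G.β1 v))

/-- The play with interior `vs` and final state `f`. -/
def playOf (vs : List G.V) (f : G.V) : List G.V := G.init :: (vs ++ [f])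

/-- A good interior: it carries a play which is connected to an accepting play. -/
def GoodI (vs : List G.V) : Prop :=
  ∃ f, G.IsPlay (G.playOf vs f) ∧ G.Acc (G.playOf vs f)

/-- The invariant satisfied by all sentential forms reachable from the axiom. -/
def Inv (form : List G.GSym) : Prop :=
  form = [Sum.inl GN.start] ∨
  (∃ pre v, List.Chain' G.E (G.init :: (pre ++ [v])) ∧
    form = G.rowFrom 0 0 pre ++ [G.cellH 0 pre.length v .gen]) ∨
  (∃ pre v suf, G.GoodI (pre ++ v :: suf) ∧
    form = G.rowMid (pre ++ v :: suf).length pre v .back suf) ∨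
  (∃ b us old v suf, G.GoodI (old ++ v :: suf) ∧
    List.Chain' G.E (G.init :: us) ∧
    List.Forall₂ (fun a c => G.βb b a = G.βb b c) us old ∧
    form = G.rowMid (old ++ v :: suf).length us v
      (.rw b ((G.init :: us).getLast (by simp))) suf) ∨
  (∃ pre v suf, G.GoodI (pre ++ v :: suf) ∧
    form = G.termRow pre ++ G.cellH (pre ++ v :: suf).length pre.length v .fin ::
      G.rowFrom (pre ++ v :: suf).length (pre.length + 1) suf) ∨
  (∃ vs, G.GoodI vs ∧ form = G.termRow vs)

/-- Symbols that carry no head: terminals and plain cells. -/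
def plainSym : G.GSym → Prop := fun s =>
  match s with
  | Sum.inl (GN.cell c) => c.head = none
  | Sum.inl GN.start => False
  | Sum.inr _ => True

lemma plain_cellP {n i : ℕ} {v : G.V} : G.plainSym (G.cellP n i v) := by
  simp [plainSym, cellP, cellS]

lemma not_plain_cellH {n i : ℕ} {v : G.V} {h : GHead G.V} : ¬ G.plainSym (G.cellH n i v h) := by
  simp [plainSym, cellH, cellS]

lemma not_plain_start : ¬ G.plainSym (Sum.inl GN.start : G.GSym) := by
  simp [plainSym]

lemma plain_rowFrom {n : ℕ} : ∀ (vs : List G.V) (i : ℕ), ∀ s ∈ G.rowFrom n i vs, G.plainSym s := by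
  intro vs
  induction vs with
  | nil => intro i s hs; simp at hs
  | cons v vs ih =>
    intro i s hs
    simp only [rowFrom_cons, List.mem_cons] at hs
    rcases hs with rfl | hs
    · exact G.plain_cellP
    · exact ih (i + 1) s hs

lemma plain_termRow : ∀ (vs : List G.V), ∀ s ∈ G.termRow vs, G.plainSym s := by
  intro vs s hs
  simp [termRow] at hs
  obtain ⟨v, -, rfl⟩ := hs
  simp [plainSym]

/-- The key alignment lemma: a rule-application site containing a head symbol must
be aligned with the unique head of the sentential form. -/
lemma align {p q x y : List G.GSym} {a h : G.GSym}
    (hp : ∀ s ∈ p, G.plainSym s) (hq : ∀ s ∈ q, G.plainSym s) (ha : ¬ G.plainSym a)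
    (heq : x ++ a :: y = p ++ h :: q) : x = p ∧ a = h ∧ y = q := by
  induction p generalizing x with
  | nil =>
    cases x with
    | nil =>
      simp only [List.nil_append, List.cons.injEq] at heq
      exact ⟨rfl, heq.1, heq.2⟩
    | cons t x' =>
      simp only [List.cons_append, List.nil_append, List.cons.injEq] at heq
      exfalso
      apply ha
      apply hq
      rw [← heq.2]
      exact List.mem_append_right _ (List.mem_cons_self)
  | cons s p' ih =>
    cases x with
    | nil =>
      simp only [List.nil_append, List.cons_append, List.cons.injEq] at heq
      exact absurd (heq.1 ▸ hp s (List.mem_cons_self)) ha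
    | cons t x' =>
      simp only [List.cons_append, List.cons.injEq] at heq
      obtain ⟨rfl, heq⟩ := heq
      obtain ⟨h1, h2, h3⟩ := ih (fun s hs => hp s (List.mem_cons_of_mem _ hs)) heq
      exact ⟨by rw [h1], h2, h3⟩

/-- No rule applies to an all-plain form. -/
lemma no_step_of_plain {form : List G.GSym} (hf : ∀ s ∈ form, G.plainSym s)
    {x y : List G.GSym} {a : G.GSym} (ha : ¬ G.plainSym a) (heq : form = x ++ a :: y) :
    False :=
  ha (hf a (heq ▸ List.mem_append_right _ (List.mem_cons_self)))

lemma rowFrom_append {n : ℕ} : ∀ (a b : List G.V) (i : ℕ),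
    G.rowFrom n i (a ++ b) = G.rowFrom n i a ++ G.rowFrom n (i + a.length) b := by
  intro a
  induction a with
  | nil => intro b i; simp
  | cons v a ih =>
    intro b i
    simp only [List.cons_append, rowFrom_cons, ih, List.length_cons]
    rw [show i + (a.length + 1) = i + 1 + a.length by omega]

lemma rowFrom_zero_eq {n : ℕ} : ∀ (vs : List G.V) (i : ℕ), i + vs.length < n →
    G.rowFrom n i vs = G.rowFrom 0 i vs := by
  intro vs
  induction vs with
  | nil => intro i _; rfl
  | cons v vs ih =>
    intro i hi
    simp only [List.length_cons] at hi
    simp only [rowFrom_cons, ih (i + 1) (by omega)]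
    have e1 : decide (i + 1 = n) = false := decide_eq_false (by omega)
    have e2 : decide (i + 1 = 0) = false := decide_eq_false (by omega)
    simp only [cellP, cellS, e1, e2]

lemma step_of_rule {l r x y : List G.GSym} (h : (l, r) ∈ G.Rules) :
    GrammarStep G.Rules (x ++ l ++ y) (x ++ r ++ y) := ⟨x, y, l, r, h, rfl, rfl⟩

lemma r1_mem {v : G.V} (h1 : G.E G.init v) (h2 : G.AccEnd v) : G.rule1 v ∈ G.Rules :=
  Or.inl <| Or.inl <| Or.inl <| Or.inl <| Or.inl <| Or.inl <| Or.inl <| Or.inl <| Or.inl <|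
    Or.inl ⟨v, ⟨h1, h2⟩, rfl⟩

lemma r2_mem {v : G.V} (h1 : G.E G.init v) : G.rule2 v ∈ G.Rules :=
  Or.inl <| Or.inl <| Or.inl <| Or.inl <| Or.inl <| Or.inl <| Or.inl <| Or.inl <| Or.inl <|
    Or.inr ⟨v, h1, rfl⟩

lemma r3_mem {q : G.V × G.V × Bool} (h1 : G.E q.1 q.2.1) : G.rule3 q ∈ G.Rules :=
  Or.inl <| Or.inl <| Or.inl <| Or.inl <| Or.inl <| Or.inl <| Or.inl <| Or.inl <|
    Or.inr ⟨q, h1, rfl⟩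

lemma r4_mem {q : G.V × G.V × Bool} (h1 : G.E q.1 q.2.1) (h2 : G.AccEnd q.2.1) :
    G.rule4 q ∈ G.Rules :=
  Or.inl <| Or.inl <| Or.inl <| Or.inl <| Or.inl <| Or.inl <| Or.inl <|
    Or.inr ⟨q, ⟨h1, h2⟩, rfl⟩

lemma r5_mem (q : G.V × G.V × Bool × Bool) : G.rule5 q ∈ G.Rules :=
  Or.inl <| Or.inl <| Or.inl <| Or.inl <| Or.inl <| Or.inl <| Or.inr ⟨q, trivial, rfl⟩

lemma r6_mem (q : G.V × Bool × Bool) : G.rule6 q ∈ G.Rules :=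
  Or.inl <| Or.inl <| Or.inl <| Or.inl <| Or.inl <| Or.inr ⟨q, trivial, rfl⟩

lemma r7_mem (q : G.V × Bool) : G.rule7 q ∈ G.Rules :=
  Or.inl <| Or.inl <| Or.inl <| Or.inl <| Or.inr ⟨q, trivial, rfl⟩

lemma r8_mem {q : G.V × G.V × G.V × G.V × Bool × Bool × Bool} (h1 : G.E q.2.2.1 q.2.1)
    (h2 : G.βb q.2.2.2.2.2.2 q.1 = G.βb q.2.2.2.2.2.2 q.2.1) : G.rule8 q ∈ G.Rules :=
  Or.inl <| Or.inl <| Or.inl <| Or.inr ⟨q, ⟨h1, h2⟩, rfl⟩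

lemma r9_mem {q : G.V × G.V × G.V × Bool × Bool} (h1 : G.E q.2.2.1 q.2.1)
    (h2 : G.βb q.2.2.2.2 q.1 = G.βb q.2.2.2.2 q.2.1) (h3 : G.FinEnd q.2.1) :
    G.rule9 q ∈ G.Rules :=
  Or.inl <| Or.inl <| Or.inr ⟨q, ⟨h1, h2, h3⟩, rfl⟩

lemma r10_mem (q : G.V × G.V × Bool × Bool) : G.rule10 q ∈ G.Rules :=
  Or.inl <| Or.inr ⟨q, trivial, rfl⟩

lemma r11_mem (q : G.V × Bool) : G.rule11 q ∈ G.Rules :=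
  Or.inr ⟨q, trivial, rfl⟩

end CGame
end Part3
section Part4
namespace CGame
variable {Γ : Type} (G : CGame Γ)

/-- Multi-step derivation. -/
def Deriv : List G.GSym → List G.GSym → Prop :=
  Relation.ReflTransGen (GrammarStep G.Rules)

lemma cellH_zero_n {n : ℕ} (v : G.V) (h : GHead G.V) :
    G.cellH n 0 v h = G.cellS v true (decide (0 + 1 = n)) (some h) := by
  simp [cellH, cellS]

lemma cellH_succ {n i : ℕ} (v : G.V) (h : GHead G.V) :
    G.cellH n (i + 1) v h = G.cellS v false (decide (i + 1 + 1 = n)) (some h) := by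
  simp [cellH, cellS]

lemma cellH_last {n i : ℕ} (hn : i + 1 = n) (v : G.V) (h : GHead G.V) :
    G.cellH n i v h = G.cellS v (decide (i = 0)) true (some h) := by
  simp [cellH, cellS, hn]

lemma cellH_mid {n i : ℕ} (hn : i + 1 ≠ n) (v : G.V) (h : GHead G.V) :
    G.cellH n i v h = G.cellS v (decide (i = 0)) false (some h) := by
  simp [cellH, cellS, hn]

lemma cellP_mid {n i : ℕ} (hn : i + 1 ≠ n) (v : G.V) :
    G.cellP n i v = G.cellS v (decide (i = 0)) false none := by
  simp [cellP, cellS, hn]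

lemma cellP_succ {n i : ℕ} (v : G.V) :
    G.cellP n (i + 1) v = G.cellS v false (decide (i + 1 + 1 = n)) none := by
  simp [cellP, cellS]

lemma chain'_front {l1 l2 : List G.V} (h : List.Chain' G.E (l1 ++ l2)) :
    List.Chain' G.E l1 := (List.isChain_append.mp h).1

lemma chain'_mid_edge {a : G.V} (us : List G.V) (nv : G.V) (rest : List G.V)
    (h : List.Chain' G.E (a :: (us ++ nv :: rest))) :
    G.E ((a :: us).getLast (by simp)) nv := by
  have h' : List.Chain' G.E ((a :: us) ++ (nv :: rest)) := by simpa using h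
  exact (List.isChain_append.mp h').2.2 _ (List.getLast?_eq_getLast (by simp)) _ rfl

lemma forall₂_of_map_eq {β : Type} (f : G.V → β) :
    ∀ (l l' : List G.V), l.map f = l'.map f → List.Forall₂ (fun a c => f a = f c) l l' := by
  intro l
  induction l with
  | nil =>
    intro l' h
    cases l' with
    | nil => exact List.Forall₂.nil
    | cons a l' => simp at h
  | cons a l ih =>
    intro l' h
    cases l' with
    | nil => simp at h
    | cons a' l' =>
      simp only [List.map_cons, List.cons.injEq] at h
      exact List.Forall₂.cons h.1 (ih l' h.2)

/-- Phase 1a: generating a path, with the generator head at the right end. -/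
lemma deriv_gen : ∀ (ws : List G.V) (v : G.V),
    List.Chain' G.E (G.init :: (ws ++ [v])) →
    G.Deriv [Sum.inl GN.start] (G.rowFrom 0 0 ws ++ [G.cellH 0 ws.length v .gen]) := by
  intro ws
  induction ws using List.reverseRecOn with
  | nil =>
    intro v hch
    apply Relation.ReflTransGen.single
    have h1 : G.E G.init v := by
      simp only [List.nil_append] at hch
      exact (List.isChain_cons_cons.mp hch).1
    have := G.step_of_rule (x := []) (y := []) (G.r2_mem h1)
    simpa [rule2, cellH_zero_n, cellS] using this
  | append_singleton ws w ih =>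
    intro v hch
    have hch' : List.Chain' G.E (G.init :: (ws ++ [w])) := by
      apply G.chain'_front (l2 := [v])
      simpa using hch
    refine Relation.ReflTransGen.tail (ih w hch') ?_
    have hE : G.E w v := by
      have := G.chain'_mid_edge (ws ++ [w]) v [] (by simpa using hch)
      simpa [List.getLast_concat] using this
    have step := G.step_of_rule (x := G.rowFrom 0 0 ws) (y := [])
      (G.r3_mem (q := (w, v, decide (ws.length = 0))) hE)
    simp only [rule3] at step
    have e1 : G.cellH 0 ws.length w .gen = G.cellS w (decide (ws.length = 0)) false (some .gen) :=
      G.cellH_mid (by omega) w .gen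
    have e2 : G.rowFrom 0 0 (ws ++ [w]) = G.rowFrom 0 0 ws ++
        [G.cellS w (decide (ws.length = 0)) false none] := by
      rw [G.rowFrom_append]
      simp [cellP_mid (G := G) (show ws.length + 1 ≠ 0 by omega), Nat.zero_add]
    have e3 : G.cellH 0 (ws ++ [w]).length v .gen = G.cellS v false false (some .gen) := by
      rw [List.length_append]
      exact G.cellH_mid (by omega) v .gen
    rw [e1, e2, e3]
    simpa using step

/-- Phase 1b: finishing generation, leaving the back head at the right end. -/
lemma deriv_gen_done : ∀ (pre : List G.V) (lv : G.V),
    List.Chain' G.E (G.init :: (pre ++ [lv])) → G.AccEnd lv →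
    G.Deriv [Sum.inl GN.start] (G.rowMid (pre ++ [lv]).length pre lv .back []) := by
  intro pre lv hch hacc
  cases pre using List.reverseRecOn with
  | nil =>
    apply Relation.ReflTransGen.single
    have h1 : G.E G.init lv := by
      simp only [List.nil_append] at hch
      exact (List.isChain_cons_cons.mp hch).1
    have := G.step_of_rule (x := []) (y := []) (G.r1_mem h1 hacc)
    simpa [rowMid, cellH_zero_n, cellS] using this
  | append_singleton pre' p =>
    have hch' : List.Chain' G.E (G.init :: (pre' ++ [p])) := by
      apply G.chain'_front (l2 := [lv])
      simpa using hch
    refine Relation.ReflTransGen.tail (G.deriv_gen pre' p hch') ?_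
    have hE : G.E p lv := by
      have := G.chain'_mid_edge (pre' ++ [p]) lv [] (by simpa using hch)
      simpa [List.getLast_concat] using this
    have step := G.step_of_rule (x := G.rowFrom 0 0 pre') (y := [])
      (G.r4_mem (q := (p, lv, decide (pre'.length = 0))) hE hacc)
    simp only [rule4] at step
    have e1 : G.cellH 0 pre'.length p .gen =
        G.cellS p (decide (pre'.length = 0)) false (some .gen) :=
      G.cellH_mid (by omega) p .gen
    -- target shape
    have hn : ((pre' ++ [p]) ++ [lv]).length = pre'.length + 2 := by simp
    simp only [rowMid, hn]
    have e2 : G.rowFrom (pre'.length + 2) 0 (pre' ++ [p]) = G.rowFrom 0 0 pre' ++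
        [G.cellS p (decide (pre'.length = 0)) false none] := by
      rw [G.rowFrom_append, G.rowFrom_zero_eq pre' 0 (by omega)]
      simp [cellP_mid (G := G) (show pre'.length + 1 ≠ pre'.length + 2 by omega), Nat.zero_add]
    have e3 : G.cellH (pre'.length + 2) (pre' ++ [p]).length lv .back =
        G.cellS lv false true (some .back) := by
      rw [List.length_append]
      rw [G.cellH_last (by simp) lv .back]
      simp
    rw [e1, e2, e3]
    simpa using step

lemma getLast_snoc (a x : G.V) (us : List G.V) :
    (a :: (us ++ [x])).getLast (by simp) = x := by
  have h1 : (a :: (us ++ [x])).getLast? = some x := by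
    rw [show a :: (us ++ [x]) = (a :: us) ++ [x] by simp]
    exact List.getLast?_concat
  have h2 := List.getLast?_eq_getLast (l := a :: (us ++ [x])) (by simp)
  have := h1.symm.trans h2
  exact (Option.some.inj this).symm

/-- Phase 2: walking the back head to the left end. -/
lemma deriv_back (n : ℕ) (pre : List G.V) : ∀ (v : G.V) (suf rest : List G.V) (w : G.V),
    pre ++ v :: suf = w :: rest → n = (w :: rest).length →
    G.Deriv (G.rowMid n pre v .back suf) (G.rowMid n [] w .back rest) := by
  induction pre using List.reverseRecOn with
  | nil =>
    intro v suf rest w he _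
    simp only [List.nil_append, List.cons.injEq] at he
    obtain ⟨rfl, rfl⟩ := he
    exact Relation.ReflTransGen.refl
  | append_singleton pre' p ih =>
    intro v suf rest w he hn
    have hnval : n = pre'.length + 2 + suf.length := by
      have hlen := congrArg List.length he
      simp at hlen
      simp only [List.length_cons] at hn
      omega
    have step := G.step_of_rule (x := G.rowFrom n 0 pre') (y := G.rowFrom n (pre'.length + 2) suf)
      (G.r5_mem (p, v, decide (pre'.length = 0), decide (pre'.length + 1 + 1 = n)))
    simp only [rule5] at step
    have e1 : G.rowFrom n 0 (pre' ++ [p]) = G.rowFrom n 0 pre' ++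
        [G.cellS p (decide (pre'.length = 0)) false none] := by
      rw [G.rowFrom_append]
      simp only [Nat.zero_add, rowFrom_cons, rowFrom_nil]
      rw [G.cellP_mid (by omega)]
    have e2 : G.cellH n (pre' ++ [p]).length v .back =
        G.cellS v false (decide (pre'.length + 1 + 1 = n)) (some .back) := by
      rw [List.length_append]
      exact G.cellH_succ v .back
    have e3 : G.cellH n pre'.length p .back =
        G.cellS p (decide (pre'.length = 0)) false (some .back) :=
      G.cellH_mid (by omega) p .back
    have e4 : G.cellP n (pre'.length + 1) v =
        G.cellS v false (decide (pre'.length + 1 + 1 = n)) none := G.cellP_succ v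
    have ih' := ih p (v :: suf) rest w (by simpa using he) hn
    refine Relation.ReflTransGen.head ?_ ih'
    have target : G.rowMid n pre' p .back (v :: suf) = G.rowFrom n 0 pre' ++
        ([G.cellS p (decide (pre'.length = 0)) false (some .back),
          G.cellS v false (decide (pre'.length + 1 + 1 = n)) none] ++
          G.rowFrom n (pre'.length + 2) suf) := by
      simp only [rowMid, rowFrom_cons, e3, e4]
      simp
    have src : G.rowMid n (pre' ++ [p]) v .back suf = G.rowFrom n 0 pre' ++
        ([G.cellS p (decide (pre'.length = 0)) false none,
          G.cellS v false (decide (pre'.length + 1 + 1 = n)) (some .back)] ++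
          G.rowFrom n (pre'.length + 2) suf) := by
      simp only [rowMid, List.length_append, List.length_singleton, e1]
      rw [G.cellH_succ]
      simp
    rw [src, target]
    simpa using step

/-- Phase 3, middle: the rewriting head sweeps right, replacing the play. -/
lemma deriv_rw_mid (suf : List G.V) : ∀ (us : List G.V) (v nv : G.V) (nsuf : List G.V)
    (b : Bool) (n : ℕ) (pre : List G.V) (lv : G.V),
    n = us.length + 1 + suf.length →
    List.Chain' G.E (G.init :: (us ++ nv :: nsuf)) →
    List.Forall₂ (fun a c => G.βb b a = G.βb b c) (v :: suf) (nv :: nsuf) →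
    G.FinEnd ((nv :: nsuf).getLast (by simp)) →
    us ++ nv :: nsuf = pre ++ [lv] →
    G.Deriv (G.rowMid n us v (.rw b ((G.init :: us).getLast (by simp))) suf)
      (G.rowMid n pre lv .back []) := by
  induction suf with
  | nil =>
    intro us v nv nsuf b n pre lv hn hch hF hfin he
    simp only [List.length_nil] at hn
    have hns : nsuf = [] := by
      cases nsuf with
      | nil => rfl
      | cons a l => exact absurd hF.length_eq (by simp)
    subst hns
    have hβ : G.βb b v = G.βb b nv := by
      cases hF with
      | cons h _ => exact h
    have hE : G.E ((G.init :: us).getLast (by simp)) nv := G.chain'_mid_edge us nv [] hch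
    have hfin' : G.FinEnd nv := by simpa using hfin
    obtain ⟨h1, h2⟩ : us = pre ∧ nv = lv := by
      have hlen : us.length = pre.length := by
        have := congrArg List.length he
        simp at this
        omega
      obtain ⟨h1, h2⟩ := List.append_inj he hlen
      simp at h2
      exact ⟨h1, h2⟩
    rw [← h1, ← h2]
    apply Relation.ReflTransGen.single
    have step := G.step_of_rule (x := G.rowFrom n 0 us) (y := [])
      (G.r9_mem (q := (v, nv, (G.init :: us).getLast (by simp), decide (us.length = 0), b))
        hE hβ hfin')
    simp only [rule9] at step
    have e1 : G.cellH n us.length v (.rw b ((G.init :: us).getLast (by simp))) =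
        G.cellS v (decide (us.length = 0)) true
          (some (.rw b ((G.init :: us).getLast (by simp)))) :=
      G.cellH_last (by omega) v _
    have e2 : G.cellH n us.length nv .back =
        G.cellS nv (decide (us.length = 0)) true (some .back) :=
      G.cellH_last (by omega) nv _
    simp only [rowMid, rowFrom_nil, e1, e2]
    simpa using step
  | cons s suf' ih =>
    intro us v nv nsuf b n pre lv hn hch hF hfin he
    simp only [List.length_cons] at hn
    obtain ⟨ns, nsuf', rfl⟩ : ∃ ns nsuf', nsuf = ns :: nsuf' := by
      cases nsuf with
      | nil => exact absurd hF.length_eq (by simp)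
      | cons a l => exact ⟨a, l, rfl⟩
    have hβ : G.βb b v = G.βb b nv := by
      cases hF with
      | cons h _ => exact h
    have hF' : List.Forall₂ (fun a c => G.βb b a = G.βb b c) (s :: suf') (ns :: nsuf') := by
      cases hF with
      | cons _ h => exact h
    have hE : G.E ((G.init :: us).getLast (by simp)) nv :=
      G.chain'_mid_edge us nv (ns :: nsuf') hch
    have step := G.step_of_rule (x := G.rowFrom n 0 us) (y := G.rowFrom n (us.length + 2) suf')
      (G.r8_mem (q := (v, nv, (G.init :: us).getLast (by simp), s, decide (us.length = 0),
        decide (us.length + 1 + 1 = n), b)) hE hβ)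
    simp only [rule8] at step
    refine Relation.ReflTransGen.head
      (b := G.rowMid n (us ++ [nv]) s (.rw b ((G.init :: (us ++ [nv])).getLast (by simp))) suf')
      ?_ ?_
    · have e1 : G.cellH n us.length v (.rw b ((G.init :: us).getLast (by simp))) =
          G.cellS v (decide (us.length = 0)) false
            (some (.rw b ((G.init :: us).getLast (by simp)))) :=
        G.cellH_mid (by omega) v _
      have e2 : G.cellP n (us.length + 1) s =
          G.cellS s false (decide (us.length + 1 + 1 = n)) none := G.cellP_succ s
      have src : G.rowMid n us v (.rw b ((G.init :: us).getLast (by simp))) (s :: suf') =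
          G.rowFrom n 0 us ++
          ([G.cellS v (decide (us.length = 0)) false
              (some (.rw b ((G.init :: us).getLast (by simp)))),
            G.cellS s false (decide (us.length + 1 + 1 = n)) none] ++
            G.rowFrom n (us.length + 2) suf') := by
        simp only [rowMid, rowFrom_cons, e1, e2]
        simp
      have e3 : G.cellH n (us ++ [nv]).length s
          (.rw b ((G.init :: (us ++ [nv])).getLast (by simp))) =
          G.cellS s false (decide (us.length + 1 + 1 = n)) (some (.rw b nv)) := by
        rw [List.length_append, List.length_singleton, G.getLast_snoc]
        exact G.cellH_succ s _
      have e4 : G.rowFrom n 0 (us ++ [nv]) = G.rowFrom n 0 us ++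
          [G.cellS nv (decide (us.length = 0)) false none] := by
        rw [G.rowFrom_append]
        simp only [Nat.zero_add, rowFrom_cons, rowFrom_nil]
        rw [G.cellP_mid (by omega)]
      have target : G.rowMid n (us ++ [nv]) s
          (.rw b ((G.init :: (us ++ [nv])).getLast (by simp))) suf' =
          G.rowFrom n 0 us ++
          ([G.cellS nv (decide (us.length = 0)) false none,
            G.cellS s false (decide (us.length + 1 + 1 = n)) (some (.rw b nv))] ++
            G.rowFrom n (us.length + 2) suf') := by
        simp only [rowMid, List.length_append, List.length_singleton, G.getLast_snoc, e4]
        rw [G.cellH_succ]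
        simp
      rw [src, target]
      simpa using step
    · have hch' : List.Chain' G.E (G.init :: ((us ++ [nv]) ++ ns :: nsuf')) := by
        simpa using hch
      have he' : (us ++ [nv]) ++ ns :: nsuf' = pre ++ [lv] := by
        simpa using he
      exact ih (us ++ [nv]) s ns nsuf' b n pre lv
        (by simp only [List.length_append, List.length_singleton]; omega) hch' hF'
        (by simpa using hfin) he'

/-- Phase 3: a full rewriting sweep, starting and ending with the back head. -/
lemma deriv_rw (n : ℕ) (b : Bool) (w : G.V) (rest ns : List G.V) (pre : List G.V) (lv : G.V)
    (hn : n = (w :: rest).length)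
    (hch : List.Chain' G.E (G.init :: ns))
    (hF : List.Forall₂ (fun a c => G.βb b a = G.βb b c) (w :: rest) ns)
    (hfin : ∀ hne : ns ≠ [], G.FinEnd (ns.getLast hne))
    (he : ns = pre ++ [lv]) :
    G.Deriv (G.rowMid n [] w .back rest) (G.rowMid n pre lv .back []) := by
  obtain ⟨nv, nsuf, rfl⟩ : ∃ nv nsuf, ns = nv :: nsuf := by
    cases ns with
    | nil => exact absurd hF.length_eq (by simp)
    | cons a l => exact ⟨a, l, rfl⟩
  refine Relation.ReflTransGen.head
    (b := G.rowMid n [] w (.rw b ((G.init :: ([] : List G.V)).getLast (by simp))) rest) ?_ ?_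
  · have step := G.step_of_rule (x := []) (y := G.rowFrom n 1 rest)
      (G.r6_mem (w, decide (0 + 1 = n), b))
    simp only [rule6] at step
    have e1 : G.cellH n 0 w .back = G.cellS w true (decide (0 + 1 = n)) (some .back) :=
      G.cellH_zero_n w .back
    have e2 : G.cellH n 0 w (.rw b ((G.init :: ([] : List G.V)).getLast (by simp))) =
        G.cellS w true (decide (0 + 1 = n)) (some (.rw b G.init)) :=
      G.cellH_zero_n w _
    simp only [rowMid, rowFrom_nil, List.nil_append, List.length_nil, e1, e2]
    simpa using step
  · exact G.deriv_rw_mid rest [] w nv nsuf b n pre lv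
      (by simp only [List.length_nil, List.length_cons, hn]; omega) (by simpa using hch) hF
      (by simpa using hfin (by simp)) (by simpa using he)

/-- Phase 4, middle: the finalisation head sweeps right emitting terminals. -/
lemma deriv_fin_mid (suf : List G.V) : ∀ (done : List G.V) (v : G.V) (n : ℕ),
    n = done.length + 1 + suf.length →
    G.Deriv (G.termRow done ++ G.cellH n done.length v .fin ::
        G.rowFrom n (done.length + 1) suf)
      (G.termRow (done ++ v :: suf)) := by
  induction suf with
  | nil =>
    intro done v n hn
    simp only [List.length_nil] at hn
    apply Relation.ReflTransGen.single
    have step := G.step_of_rule (x := G.termRow done) (y := [])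
      (G.r11_mem (v, decide (done.length = 0)))
    simp only [rule11] at step
    have e1 : G.cellH n done.length v .fin =
        G.cellS v (decide (done.length = 0)) true (some .fin) :=
      G.cellH_last (by omega) v _
    have e2 : G.termRow (done ++ [v]) = G.termRow done ++ [Sum.inr (G.β1 v)] := by
      simp [termRow]
    rw [e1, e2]
    simpa using step
  | cons s suf' ih =>
    intro done v n hn
    simp only [List.length_cons] at hn
    refine Relation.ReflTransGen.head
      (b := G.termRow (done ++ [v]) ++ G.cellH n (done.length + 1) s .fin ::
        G.rowFrom n (done.length + 2) suf') ?_ ?_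
    · have step := G.step_of_rule (x := G.termRow done) (y := G.rowFrom n (done.length + 2) suf')
        (G.r10_mem (v, s, decide (done.length = 0), decide (done.length + 1 + 1 = n)))
      simp only [rule10] at step
      have e1 : G.cellH n done.length v .fin =
          G.cellS v (decide (done.length = 0)) false (some .fin) :=
        G.cellH_mid (by omega) v _
      have e2 : G.cellP n (done.length + 1) s =
          G.cellS s false (decide (done.length + 1 + 1 = n)) none := G.cellP_succ s
      have e3 : G.cellH n (done.length + 1) s .fin =
          G.cellS s false (decide (done.length + 1 + 1 = n)) (some .fin) :=
        G.cellH_succ s _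
      have e4 : G.termRow (done ++ [v]) = G.termRow done ++ [Sum.inr (G.β1 v)] := by
        simp [termRow]
      simp only [rowFrom_cons, e1, e2, e3, e4]
      simpa using step
    · have := ih (done ++ [v]) s n
        (by simp only [List.length_append, List.length_singleton]; omega)
      simpa [Deriv] using this

/-- Phase 4: the full finalisation sweep. -/
lemma deriv_fin (n : ℕ) (w : G.V) (rest : List G.V) (hn : n = (w :: rest).length) :
    G.Deriv (G.rowMid n [] w .back rest) (G.termRow (w :: rest)) := by
  refine Relation.ReflTransGen.head
    (b := G.termRow [] ++ G.cellH n 0 w .fin :: G.rowFrom n 1 rest) ?_ ?_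
  · have step := G.step_of_rule (x := []) (y := G.rowFrom n 1 rest)
      (G.r7_mem (w, decide (0 + 1 = n)))
    simp only [rule7] at step
    have e1 : G.cellH n 0 w .back = G.cellS w true (decide (0 + 1 = n)) (some .back) :=
      G.cellH_zero_n w .back
    have e2 : G.cellH n 0 w .fin = G.cellS w true (decide (0 + 1 = n)) (some .fin) :=
      G.cellH_zero_n w _
    simp only [rowMid, rowFrom_nil, List.nil_append, List.length_nil, e1, e2, termRow,
      List.map_nil]
    simpa using step
  · have := G.deriv_fin_mid rest [] w n
      (by simp only [List.length_nil, List.length_cons, hn]; omega)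
    simpa [termRow, Deriv] using this

end CGame
end Part4
section Part5
namespace CGame
variable {Γ : Type} (G : CGame Γ)

/-- The interior of a play: everything except initial and final states. -/
def interior (π : List G.V) : List G.V := (π.drop 1).dropLast

lemma interior_playOf (vs : List G.V) (f : G.V) : G.interior (G.playOf vs f) = vs := by
  simp [interior, playOf]

lemma obs1_eq_interior (π : List G.V) : G.obs1 π = (G.interior π).map G.β1 := rfl

lemma obs2_eq_interior (π : List G.V) : G.obs2 π = (G.interior π).map G.β2 := rfl

lemma isPlay_decomp {π : List G.V} (hπ : G.IsPlay π) :
    ∃ f, π = G.playOf (G.interior π) f := by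
  obtain ⟨hlen, hhead, -, -⟩ := hπ
  cases π with
  | nil => simp at hlen
  | cons a rest =>
    have ha : a = G.init := by simpa using hhead
    cases rest with
    | nil => simp at hlen
    | cons b rest' =>
      refine ⟨(b :: rest').getLast (by simp), ?_⟩
      subst ha
      simp only [playOf, interior, List.drop_succ_cons, List.drop_zero, List.cons.injEq,
        true_and]
      exact (List.dropLast_append_getLast (by simp)).symm

lemma playOf_getLast? (vs : List G.V) (f : G.V) : (G.playOf vs f).getLast? = some f := by
  rw [show G.playOf vs f = (G.init :: vs) ++ [f] by simp [playOf]]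
  exact List.getLast?_concat

lemma isPlay_playOf_chain {vs : List G.V} {f : G.V} (h : G.IsPlay (G.playOf vs f)) :
    List.Chain' G.E (G.init :: (vs ++ [f])) := h.2.2.1

lemma isFinal_of_playOf {vs : List G.V} {f : G.V} (h : G.IsPlay (G.playOf vs f)) :
    G.IsFinal f := h.2.2.2 f (G.playOf_getLast? vs f)

lemma omegaP_playOf (vs : List G.V) (f : G.V) : G.OmegaP (G.playOf vs f) = G.Ω f := by
  ext a
  simp only [OmegaP, Set.mem_setOf_eq, G.playOf_getLast? vs f, Option.some.injEq]
  constructor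
  · rintro ⟨v, hv, ha⟩
    exact hv ▸ ha
  · intro ha
    exact ⟨f, rfl, ha⟩

lemma isPlay_playOf_intro {vs : List G.V} {f : G.V}
    (hch : List.Chain' G.E (G.init :: (vs ++ [f]))) (hf : G.IsFinal f) :
    G.IsPlay (G.playOf vs f) := by
  refine ⟨by simp [playOf], by simp [playOf], hch, ?_⟩
  intro v hv
  rw [G.playOf_getLast?] at hv
  cases hv
  exact hf

lemma chain_interior {vs : List G.V} {f : G.V} (h : G.IsPlay (G.playOf vs f)) :
    List.Chain' G.E (G.init :: vs) := by
  have := G.isPlay_playOf_chain h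
  exact G.chain'_front (l2 := [f]) (by simpa using this)

lemma finEnd_of_play {vs : List G.V} {f : G.V} (h : G.IsPlay (G.playOf vs f))
    (hne : vs ≠ []) : G.FinEnd (vs.getLast hne) := by
  have hch := G.isPlay_playOf_chain h
  have hE : G.E ((G.init :: vs).getLast (by simp)) f := G.chain'_mid_edge vs f [] hch
  rw [List.getLast_cons hne] at hE
  exact ⟨f, hE, G.isFinal_of_playOf h⟩

lemma accEnd_of_play {vs : List G.V} {f : G.V} (h : G.IsPlay (G.playOf vs f))
    (hne : vs ≠ []) (hΩ : G.Ω f = {true}) : G.AccEnd (vs.getLast hne) := by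
  have hch := G.isPlay_playOf_chain h
  have hE : G.E ((G.init :: vs).getLast (by simp)) f := G.chain'_mid_edge vs f [] hch
  rw [List.getLast_cons hne] at hE
  exact ⟨f, hE, G.isFinal_of_playOf h, hΩ⟩

/-- The main completeness induction: from any accepted play, the corresponding
row with the back head at the left end is derivable. -/
lemma deriv_back0_of_acc (π : List G.V) (hπ : G.IsPlay π) (hacc : G.Acc π) :
    ∀ w rest, G.interior π = w :: rest →
    G.Deriv [Sum.inl GN.start] (G.rowMid (w :: rest).length [] w .back rest) := by
  obtain ⟨σ, hσ, hconn, hΩ⟩ := hacc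
  clear hπ
  induction hconn using Relation.ReflTransGen.head_induction_on with
  | refl =>
    intro w rest hint
    obtain ⟨f, hf⟩ := G.isPlay_decomp hσ
    set vs := G.interior σ with hvs
    have hplay : G.IsPlay (G.playOf vs f) := hf ▸ hσ
    have hΩf : G.Ω f = {true} := by
      rw [hf, G.omegaP_playOf] at hΩ
      exact hΩ
    have hne : vs ≠ [] := by rw [hint]; simp
    have hchain : List.Chain' G.E (G.init :: (vs.dropLast ++ [vs.getLast hne])) := by
      rw [List.dropLast_append_getLast hne]
      exact G.chain_interior hplay
    have h1 := G.deriv_gen_done vs.dropLast (vs.getLast hne) hchain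
      (G.accEnd_of_play hplay hne hΩf)
    rw [List.dropLast_append_getLast hne] at h1
    refine h1.trans ?_
    have hd := G.deriv_back vs.length vs.dropLast (vs.getLast hne) [] rest w
      (by rw [← hint]; simpa using List.dropLast_append_getLast hne)
      (by rw [hint])
    rw [show ((w :: rest).length : ℕ) = vs.length from by rw [hint]]
    exact hd
  | @head a c hrel htail ih =>
    intro w rest hint
    obtain ⟨b, hpa, hpc, hmap⟩ : ∃ b : Bool, G.IsPlay a ∧ G.IsPlay c ∧
        (G.interior c).map (G.βb b) = (G.interior a).map (G.βb b) := by
      rcases hrel with ⟨hpa, hpc, hobs⟩ | ⟨hpa, hpc, hobs⟩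
      · exact ⟨true, hpa, hpc, by
          have : (G.interior a).map G.β1 = (G.interior c).map G.β1 := hobs
          exact this.symm⟩
      · exact ⟨false, hpa, hpc, by
          have : (G.interior a).map G.β2 = (G.interior c).map G.β2 := hobs
          exact this.symm⟩
    have hinta : G.interior a = w :: rest := hint
    have hlen : (G.interior c).length = (w :: rest).length := by
      rw [← hinta]
      have := congrArg List.length hmap
      simpa using this
    obtain ⟨w', rest', hintc⟩ : ∃ w' rest', G.interior c = w' :: rest' := by
      cases hc : G.interior c with
      | nil => rw [hc] at hlen; simp at hlen
      | cons x l => exact ⟨x, l, rfl⟩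
    have ihd := ih w' rest' hintc
    set n := (w :: rest).length with hn
    have hlen' : (w' :: rest').length = n := by rw [← hintc, hlen]
    rw [hlen'] at ihd
    refine ihd.trans ?_
    -- rewrite sweep from interior c to interior a
    obtain ⟨f, hf⟩ := G.isPlay_decomp hpa
    have hplaya : G.IsPlay (G.playOf (G.interior a) f) := hf ▸ hpa
    have hnea : G.interior a ≠ [] := by rw [hinta]; simp
    have hF : List.Forall₂ (fun x y => G.βb b x = G.βb b y) (w' :: rest') (G.interior a) := by
      rw [← hintc]
      exact G.forall₂_of_map_eq (G.βb b) _ _ hmap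
    have hsweep := G.deriv_rw n b w' rest' (G.interior a) (G.interior a).dropLast
      ((G.interior a).getLast hnea) hlen'.symm (G.chain_interior hplaya) hF
      (fun hne => G.finEnd_of_play hplaya hne)
      (List.dropLast_append_getLast hnea).symm
    refine hsweep.trans ?_
    have hback := G.deriv_back n (G.interior a).dropLast ((G.interior a).getLast hnea) [] rest w
      (by rw [← hinta]; simpa using List.dropLast_append_getLast hnea) hn
    exact hback

/-- Completeness: accepted nonempty observation words are derivable. -/
lemma complete {w : List Γ} (h : ∃ π, G.IsPlay π ∧ G.obs1 π = w ∧ G.Acc π) (hne : w ≠ []) :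
    G.Deriv [Sum.inl GN.start] (w.map Sum.inr) := by
  obtain ⟨π, hπ, hobs, hacc⟩ := h
  have hobs' : (G.interior π).map G.β1 = w := by rw [← G.obs1_eq_interior]; exact hobs
  obtain ⟨v0, rest, hint⟩ : ∃ v0 rest, G.interior π = v0 :: rest := by
    cases hi : G.interior π with
    | nil => rw [hi] at hobs'; simp at hobs'; exact absurd hobs' hne
    | cons x l => exact ⟨x, l, rfl⟩
  have h1 := G.deriv_back0_of_acc π hπ hacc v0 rest hint
  have h2 := G.deriv_fin (v0 :: rest).length v0 rest rfl
  have h3 : G.termRow (v0 :: rest) = w.map Sum.inr := by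
    rw [← hobs', ← hint]
    simp [termRow]
  rw [h3] at h2
  exact h1.trans h2

end CGame
end Part5
section Part6
namespace CGame
variable {Γ : Type} (G : CGame Γ)

lemma cellS_inj {v1 v2 : G.V} {l1 l2 r1 r2 : Bool} {h1 h2 : Option (GHead G.V)}
    (h : G.cellS v1 l1 r1 h1 = G.cellS v2 l2 r2 h2) :
    v1 = v2 ∧ l1 = l2 ∧ r1 = r2 ∧ h1 = h2 := by
  simpa [cellS] using h

lemma rowFrom_length {n : ℕ} : ∀ (vs : List G.V) (i : ℕ), (G.rowFrom n i vs).length = vs.length := by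
  intro vs
  induction vs with
  | nil => intro i; rfl
  | cons v vs ih => intro i; simp [ih]

lemma rowFrom_eq_cons {n i : ℕ} {suf : List G.V} {a : G.GSym} {y : List G.GSym}
    (h : G.rowFrom n i suf = a :: y) :
    ∃ s suf', suf = s :: suf' ∧ a = G.cellP n i s ∧ y = G.rowFrom n (i + 1) suf' := by
  cases suf with
  | nil => simp at h
  | cons s suf' =>
    rw [rowFrom_cons] at h
    obtain ⟨h1, h2⟩ := List.cons.injEq _ _ _ _ ▸ h
    exact ⟨s, suf', rfl, h1.symm, h2.symm⟩

lemma rowFrom_eq_snoc {n i : ℕ} {pre : List G.V} {x : List G.GSym} {a : G.GSym}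
    (h : G.rowFrom n i pre = x ++ [a]) :
    ∃ pre' pl, pre = pre' ++ [pl] ∧ x = G.rowFrom n i pre' ∧
      a = G.cellP n (i + pre'.length) pl := by
  induction pre using List.reverseRecOn with
  | nil => simp at h
  | append_singleton pre' pl _ =>
    rw [G.rowFrom_append] at h
    simp only [rowFrom_cons, rowFrom_nil] at h
    have hlen : (G.rowFrom n i pre').length = x.length := by
      have := congrArg List.length h
      simp at this
      exact this
    obtain ⟨h1, h2⟩ := List.append_inj h hlen
    simp at h2
    exact ⟨pre', pl, rfl, h1.symm, h2.symm⟩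

lemma termRow_eq_snoc {pre : List G.V} {x : List G.GSym} {a : G.GSym}
    (h : G.termRow pre = x ++ [a]) :
    ∃ pre' pl, pre = pre' ++ [pl] ∧ x = G.termRow pre' ∧ a = Sum.inr (G.β1 pl) := by
  induction pre using List.reverseRecOn with
  | nil => simp [termRow] at h
  | append_singleton pre' pl _ =>
    rw [show G.termRow (pre' ++ [pl]) = G.termRow pre' ++ [Sum.inr (G.β1 pl)] from by
      simp [termRow]] at h
    have hlen : (G.termRow pre').length = x.length := by
      have := congrArg List.length h
      simp at this
      exact this
    obtain ⟨h1, h2⟩ := List.append_inj h hlen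
    simp at h2
    exact ⟨pre', pl, rfl, h1.symm, h2.symm⟩

lemma chain'_snoc {us : List G.V} {u : G.V} (h : List.Chain' G.E (G.init :: us))
    (he : G.E ((G.init :: us).getLast (by simp)) u) :
    List.Chain' G.E (G.init :: (us ++ [u])) := by
  have : List.Chain' G.E ((G.init :: us) ++ [u]) := by
    simp only [List.Chain']
    rw [List.isChain_append]
    refine ⟨h, List.isChain_singleton u, ?_⟩
    intro a ha c hc
    rw [List.getLast?_eq_getLast (by simp)] at ha
    simp only [List.head?_cons, Option.mem_def, Option.some.injEq] at ha hc
    subst ha; subst hc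
    exact he
  simpa using this

lemma map_eq_of_forall₂ {β : Type} {f : G.V → β} {l l' : List G.V}
    (h : List.Forall₂ (fun a c => f a = f c) l l') : l.map f = l'.map f := by
  induction h with
  | nil => rfl
  | cons h _ ih => simp [h, ih]

lemma length_eq_zero_iff {l : List G.V} : l.length = 0 ↔ l = [] := List.length_eq_zero_iff

end CGame
end Part6
section Part7
namespace CGame
variable {Γ : Type} (G : CGame Γ)

lemma obs1_playOf (vs : List G.V) (f : G.V) : G.obs1 (G.playOf vs f) = vs.map G.β1 := by
  rw [G.obs1_eq_interior, G.interior_playOf]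

lemma obs2_playOf (vs : List G.V) (f : G.V) : G.obs2 (G.playOf vs f) = vs.map G.β2 := by
  rw [G.obs2_eq_interior, G.interior_playOf]

lemma map_βb_true (l : List G.V) : l.map (G.βb true) = l.map G.β1 := rfl

lemma map_βb_false (l : List G.V) : l.map (G.βb false) = l.map G.β2 := rfl

lemma forall₂_snoc {R : G.V → G.V → Prop} {l1 l2 : List G.V} {a b : G.V}
    (h : List.Forall₂ R l1 l2) (hab : R a b) : List.Forall₂ R (l1 ++ [a]) (l2 ++ [b]) := by
  induction h with
  | nil => simpa using List.Forall₂.cons hab List.Forall₂.nil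
  | cons hh _ ih => exact List.Forall₂.cons hh ih

/-- Building a good interior at the end of the generation phase. -/
lemma goodI_snoc {ws : List G.V} {u : G.V} (hch : List.Chain' G.E (G.init :: ws))
    (hE : G.E ((G.init :: ws).getLast (by simp)) u) (hacc : G.AccEnd u) :
    G.GoodI (ws ++ [u]) := by
  obtain ⟨f, hEf, hfin, hΩ⟩ := hacc
  have hch1 : List.Chain' G.E (G.init :: (ws ++ [u])) := G.chain'_snoc hch hE
  have hch2 : List.Chain' G.E (G.init :: ((ws ++ [u]) ++ [f])) := by
    apply G.chain'_snoc hch1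
    rw [show ((G.init :: (ws ++ [u])).getLast (by simp)) = u from G.getLast_snoc _ _ _]
    exact hEf
  have hplay : G.IsPlay (G.playOf (ws ++ [u]) f) :=
    G.isPlay_playOf_intro (by simpa using hch2) hfin
  refine ⟨f, hplay, G.playOf (ws ++ [u]) f, hplay, Relation.ReflTransGen.refl, ?_⟩
  rw [G.omegaP_playOf]
  exact hΩ

/-- Transporting a good interior across one rewriting sweep. -/
lemma goodI_rw {b : Bool} {us old : List G.V} {v u : G.V}
    (hgood : G.GoodI (old ++ [v]))
    (hch : List.Chain' G.E (G.init :: us))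
    (hE : G.E ((G.init :: us).getLast (by simp)) u)
    (hF : List.Forall₂ (fun a c => G.βb b a = G.βb b c) us old)
    (hβ : G.βb b u = G.βb b v)
    (hfin : G.FinEnd u) : G.GoodI (us ++ [u]) := by
  obtain ⟨f', hEf', hfin'⟩ := hfin
  obtain ⟨f, hplayOld, haccOld⟩ := hgood
  have hch1 : List.Chain' G.E (G.init :: (us ++ [u])) := G.chain'_snoc hch hE
  have hch2 : List.Chain' G.E (G.init :: ((us ++ [u]) ++ [f'])) := by
    apply G.chain'_snoc hch1
    rw [show ((G.init :: (us ++ [u])).getLast (by simp)) = u from G.getLast_snoc _ _ _]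
    exact hEf'
  have hplayNew : G.IsPlay (G.playOf (us ++ [u]) f') :=
    G.isPlay_playOf_intro (by simpa using hch2) hfin'
  have hmap : (old ++ [v]).map (G.βb b) = (us ++ [u]).map (G.βb b) := by
    have h1 : old.map (G.βb b) = us.map (G.βb b) := (G.map_eq_of_forall₂ hF).symm
    simp [h1, hβ]
  refine ⟨f', hplayNew, ?_⟩
  obtain ⟨σ, hσ, hconn, hΩ⟩ := haccOld
  refine ⟨σ, hσ, ?_, hΩ⟩
  refine Relation.ReflTransGen.head ?_ hconn
  cases b with
  | true =>
    refine Or.inl ⟨hplayNew, hplayOld, ?_⟩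
    rw [G.obs1_playOf, G.obs1_playOf, ← G.map_βb_true, ← G.map_βb_true]
    exact hmap.symm
  | false =>
    refine Or.inr ⟨hplayNew, hplayOld, ?_⟩
    rw [G.obs2_playOf, G.obs2_playOf, ← G.map_βb_false, ← G.map_βb_false]
    exact hmap.symm

/-- Step preservation, case: axiom form. -/
lemma inv_step_start {x y l r : List G.GSym} (hP : (l, r) ∈ G.Rules)
    (heq : x ++ l ++ y = [Sum.inl GN.start]) : G.Inv (x ++ r ++ y) := by
  rcases hP with ((((((((((⟨v1, hc, hpair⟩ | ⟨v1, hc, hpair⟩) | ⟨q, hc, hpair⟩) |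
    ⟨q, hc, hpair⟩) | ⟨q, -, hpair⟩) | ⟨q, -, hpair⟩) | ⟨q, -, hpair⟩) | ⟨q, hc, hpair⟩) |
    ⟨q, hc, hpair⟩) | ⟨q, -, hpair⟩) | ⟨q, -, hpair⟩) <;>
  rw [Prod.ext_iff] at hpair <;>
  obtain ⟨hl, hr⟩ := hpair <;>
  simp only [rule1, rule2, rule3, rule4, rule5, rule6, rule7, rule8, rule9, rule10, rule11]
    at hl hr <;>
  subst hl <;> subst hr
  -- rule 1
  · obtain ⟨hx, hh, hy⟩ := G.align (p := []) (q := []) (by simp) (by simp) G.not_plain_start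
      (by simpa using heq)
    subst hx; subst hy
    refine Or.inr (Or.inr (Or.inl ⟨[], v1, [], ?_, ?_⟩))
    · have := G.goodI_snoc (ws := []) (u := v1) (List.isChain_singleton _) (by simpa using hc.1) hc.2
      simpa using this
    · simp [rowMid, cellH, cellS]
  -- rule 2
  · obtain ⟨hx, hh, hy⟩ := G.align (p := []) (q := []) (by simp) (by simp) G.not_plain_start
      (by simpa using heq)
    subst hx; subst hy
    refine Or.inr (Or.inl ⟨[], v1, by simpa [List.Chain', List.isChain_pair] using hc, ?_⟩)
    simp [cellH, cellS]
  -- rules 3-11: impossible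
  all_goals {
    exfalso
    have hsub := List.IsInfix.subset ⟨x, y, heq⟩
    have h0 := hsub (List.mem_cons_self)
    simp [cellS] at h0
  }

/-- Step preservation, case: all-terminal form (no rule applies). -/
lemma inv_step_term {vs : List G.V} {x y l r : List G.GSym} (hP : (l, r) ∈ G.Rules)
    (heq : x ++ l ++ y = G.termRow vs) : False := by
  obtain ⟨-, -, s, hs, nn, rfl⟩ := G.rules_format _ hP
  have hmem : Sum.inl nn ∈ G.termRow vs := by
    rw [← heq]
    exact List.mem_append_left _ (List.mem_append_right _ hs)
  simp [termRow] at hmem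

/-- Step preservation, case: generation phase. -/
lemma inv_step_gen {pre : List G.V} {v : G.V} {x y l r : List G.GSym}
    (hch : List.Chain' G.E (G.init :: (pre ++ [v])))
    (hP : (l, r) ∈ G.Rules)
    (heq : x ++ l ++ y = G.rowFrom 0 0 pre ++ [G.cellH 0 pre.length v .gen]) :
    G.Inv (x ++ r ++ y) := by
  have hp : ∀ s ∈ G.rowFrom 0 0 pre, G.plainSym s := G.plain_rowFrom pre 0
  have hq : ∀ s ∈ ([] : List G.GSym), G.plainSym s := by simp
  rcases hP with ((((((((((⟨v1, hc, hpair⟩ | ⟨v1, hc, hpair⟩) | ⟨q, hc, hpair⟩) |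
    ⟨q, hc, hpair⟩) | ⟨q, -, hpair⟩) | ⟨q, -, hpair⟩) | ⟨q, -, hpair⟩) | ⟨q, hc, hpair⟩) |
    ⟨q, hc, hpair⟩) | ⟨q, -, hpair⟩) | ⟨q, -, hpair⟩) <;>
  rw [Prod.ext_iff] at hpair <;>
  obtain ⟨hl, hr⟩ := hpair <;>
  simp only [rule1, rule2, rule3, rule4, rule5, rule6, rule7, rule8, rule9, rule10, rule11]
    at hl hr <;>
  subst hl <;> subst hr
  · have heq' : x ++ Sum.inl GN.start :: y = G.rowFrom 0 0 pre ++ G.cellH 0 pre.length v .gen :: ([] : List G.GSym) := by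
      simpa using heq
    obtain ⟨hx, hh, hy⟩ := G.align hp hq G.not_plain_start heq'
    simp [cellH, cellS, plainSym] at hh
  · have heq' : x ++ Sum.inl GN.start :: y = G.rowFrom 0 0 pre ++ G.cellH 0 pre.length v .gen :: ([] : List G.GSym) := by
      simpa using heq
    obtain ⟨hx, hh, hy⟩ := G.align hp hq G.not_plain_start heq'
    simp [cellH, cellS, plainSym] at hh
  · have heq' : x ++ G.cellS q.1 q.2.2 false (some .gen) :: y = G.rowFrom 0 0 pre ++ G.cellH 0 pre.length v .gen :: ([] : List G.GSym) := by
      simpa using heq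
    obtain ⟨hx, hh, hy⟩ := G.align hp hq (by simp [plainSym, cellS]) heq'
    simp only [cellH, cellS, Sum.inl.injEq, GN.cell.injEq, GCell.mk.injEq,
      Option.some.injEq] at hh
    obtain ⟨hv, hlf, -, -⟩ := hh
    subst hx; subst hy; subst hv
    refine Or.inr (Or.inl ⟨pre ++ [q.1], q.2.1, ?_, ?_⟩)
    · apply G.chain'_snoc hch
      rw [show ((G.init :: (pre ++ [q.1])).getLast (by simp)) = q.1 from G.getLast_snoc _ _ _]
      exact hc
    · rw [G.rowFrom_append]
      simp only [Nat.zero_add, rowFrom_cons, rowFrom_nil]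
      rw [G.cellP_mid (by omega), ← hlf]
      have hcc : G.cellH 0 (pre ++ [q.1]).length q.2.1 .gen =
          G.cellS q.2.1 false false (some .gen) := by
        rw [List.length_append, List.length_singleton]
        exact G.cellH_succ _ _
      rw [hcc]
      simp
  · have heq' : x ++ G.cellS q.1 q.2.2 false (some .gen) :: y = G.rowFrom 0 0 pre ++ G.cellH 0 pre.length v .gen :: ([] : List G.GSym) := by
      simpa using heq
    obtain ⟨hx, hh, hy⟩ := G.align hp hq (by simp [plainSym, cellS]) heq'
    simp only [cellH, cellS, Sum.inl.injEq, GN.cell.injEq, GCell.mk.injEq,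
      Option.some.injEq] at hh
    obtain ⟨hv, hlf, -, -⟩ := hh
    subst hx; subst hy; subst hv
    refine Or.inr (Or.inr (Or.inl ⟨pre ++ [q.1], q.2.1, [], ?_, ?_⟩))
    · have := G.goodI_snoc (ws := pre ++ [q.1]) (u := q.2.1) hch
        (by rw [show ((G.init :: (pre ++ [q.1])).getLast (by simp)) = q.1 from
          G.getLast_snoc _ _ _]; exact hc.1) hc.2
      simpa using this
    · have hn2 : ((pre ++ [q.1]) ++ q.2.1 :: []).length = pre.length + 2 := by simp
      have h2 : G.cellH (pre.length + 2) (pre ++ [q.1]).length q.2.1 .back =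
          G.cellS q.2.1 false true (some .back) := by
        rw [List.length_append, List.length_singleton, G.cellH_last (by omega)]
        simp
      rw [hn2]
      simp only [rowMid, rowFrom_nil, h2]
      rw [G.rowFrom_append, G.rowFrom_zero_eq (n := pre.length + 2) pre 0 (by omega)]
      simp only [Nat.zero_add, rowFrom_cons, rowFrom_nil]
      rw [G.cellP_mid (by omega), ← hlf]
      simp
  · have heq' : (x ++ [G.cellS q.1 q.2.2.1 false none]) ++ G.cellS q.2.1 false q.2.2.2 (some .back) :: y = G.rowFrom 0 0 pre ++ G.cellH 0 pre.length v .gen :: ([] : List G.GSym) := by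
      simpa using heq
    obtain ⟨hx, hh, hy⟩ := G.align hp hq (by simp [plainSym, cellS]) heq'
    simp [cellH, cellS, plainSym] at hh
  · have heq' : x ++ G.cellS q.1 true q.2.1 (some .back) :: y = G.rowFrom 0 0 pre ++ G.cellH 0 pre.length v .gen :: ([] : List G.GSym) := by
      simpa using heq
    obtain ⟨hx, hh, hy⟩ := G.align hp hq (by simp [plainSym, cellS]) heq'
    simp [cellH, cellS, plainSym] at hh
  · have heq' : x ++ G.cellS q.1 true q.2 (some .back) :: y = G.rowFrom 0 0 pre ++ G.cellH 0 pre.length v .gen :: ([] : List G.GSym) := by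
      simpa using heq
    obtain ⟨hx, hh, hy⟩ := G.align hp hq (by simp [plainSym, cellS]) heq'
    simp [cellH, cellS, plainSym] at hh
  · have heq' : x ++ G.cellS q.1 q.2.2.2.2.1 false (some (.rw q.2.2.2.2.2.2 q.2.2.1)) :: (G.cellS q.2.2.2.1 false q.2.2.2.2.2.1 none :: y) = G.rowFrom 0 0 pre ++ G.cellH 0 pre.length v .gen :: ([] : List G.GSym) := by
      simpa using heq
    obtain ⟨hx, hh, hy⟩ := G.align hp hq (by simp [plainSym, cellS]) heq'
    simp [cellH, cellS, plainSym] at hh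
  · have heq' : x ++ G.cellS q.1 q.2.2.2.1 true (some (.rw q.2.2.2.2 q.2.2.1)) :: y = G.rowFrom 0 0 pre ++ G.cellH 0 pre.length v .gen :: ([] : List G.GSym) := by
      simpa using heq
    obtain ⟨hx, hh, hy⟩ := G.align hp hq (by simp [plainSym, cellS]) heq'
    simp [cellH, cellS, plainSym] at hh
  · have heq' : x ++ G.cellS q.1 q.2.2.1 false (some .fin) :: (G.cellS q.2.1 false q.2.2.2 none :: y) = G.rowFrom 0 0 pre ++ G.cellH 0 pre.length v .gen :: ([] : List G.GSym) := by
      simpa using heq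
    obtain ⟨hx, hh, hy⟩ := G.align hp hq (by simp [plainSym, cellS]) heq'
    simp [cellH, cellS, plainSym] at hh
  · have heq' : x ++ G.cellS q.1 q.2 true (some .fin) :: y = G.rowFrom 0 0 pre ++ G.cellH 0 pre.length v .gen :: ([] : List G.GSym) := by
      simpa using heq
    obtain ⟨hx, hh, hy⟩ := G.align hp hq (by simp [plainSym, cellS]) heq'
    simp [cellH, cellS, plainSym] at hh

end CGame
end Part7
section Part8
namespace CGame
variable {Γ : Type} (G : CGame Γ)

/-- Step preservation, case: back head. -/
lemma inv_step_back {n : ℕ} {pre suf : List G.V} {v : G.V} {x y l r : List G.GSym}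
    (hgood : G.GoodI (pre ++ v :: suf)) (hn : n = (pre ++ v :: suf).length)
    (hP : (l, r) ∈ G.Rules)
    (heq : x ++ l ++ y = G.rowFrom n 0 pre ++ G.cellH n pre.length v .back ::
      G.rowFrom n (pre.length + 1) suf) :
    G.Inv (x ++ r ++ y) := by
  have hp : ∀ s ∈ G.rowFrom n 0 pre, G.plainSym s := G.plain_rowFrom pre 0
  have hq : ∀ s ∈ G.rowFrom n (pre.length + 1) suf, G.plainSym s := G.plain_rowFrom suf _
  have hnval : n = pre.length + 1 + suf.length := by
    rw [hn]; simp only [List.length_append, List.length_cons]; omega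
  rcases hP with ((((((((((⟨v1, hc, hpair⟩ | ⟨v1, hc, hpair⟩) | ⟨q, hc, hpair⟩) |
    ⟨q, hc, hpair⟩) | ⟨q, -, hpair⟩) | ⟨q, -, hpair⟩) | ⟨q, -, hpair⟩) | ⟨q, hc, hpair⟩) |
    ⟨q, hc, hpair⟩) | ⟨q, -, hpair⟩) | ⟨q, -, hpair⟩) <;>
  rw [Prod.ext_iff] at hpair <;>
  obtain ⟨hl, hr⟩ := hpair <;>
  simp only [rule1, rule2, rule3, rule4, rule5, rule6, rule7, rule8, rule9, rule10, rule11]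
    at hl hr <;>
  subst hl <;> subst hr
  -- rule 1 dead
  · have heq' : x ++ (Sum.inl GN.start : G.GSym) :: y = G.rowFrom n 0 pre ++
        G.cellH n pre.length v .back :: G.rowFrom n (pre.length + 1) suf := by simpa using heq
    obtain ⟨hx, hh, hy⟩ := G.align hp hq G.not_plain_start heq'
    simp [cellH, cellS] at hh
  -- rule 2 dead
  · have heq' : x ++ (Sum.inl GN.start : G.GSym) :: y = G.rowFrom n 0 pre ++
        G.cellH n pre.length v .back :: G.rowFrom n (pre.length + 1) suf := by simpa using heq
    obtain ⟨hx, hh, hy⟩ := G.align hp hq G.not_plain_start heq'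
    simp [cellH, cellS] at hh
  -- rule 3 dead
  · have heq' : x ++ G.cellS q.1 q.2.2 false (some .gen) :: y = G.rowFrom n 0 pre ++
        G.cellH n pre.length v .back :: G.rowFrom n (pre.length + 1) suf := by simpa using heq
    obtain ⟨hx, hh, hy⟩ := G.align hp hq (by simp [plainSym, cellS]) heq'
    simp [cellH, cellS] at hh
  -- rule 4 dead
  · have heq' : x ++ G.cellS q.1 q.2.2 false (some .gen) :: y = G.rowFrom n 0 pre ++
        G.cellH n pre.length v .back :: G.rowFrom n (pre.length + 1) suf := by simpa using heq
    obtain ⟨hx, hh, hy⟩ := G.align hp hq (by simp [plainSym, cellS]) heq'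
    simp [cellH, cellS] at hh
  -- rule 5 live
  · have heq' : (x ++ [G.cellS q.1 q.2.2.1 false none]) ++
        G.cellS q.2.1 false q.2.2.2 (some .back) :: y = G.rowFrom n 0 pre ++
        G.cellH n pre.length v .back :: G.rowFrom n (pre.length + 1) suf := by simpa using heq
    obtain ⟨hx, hh, hy⟩ := G.align hp hq (by simp [plainSym, cellS]) heq'
    simp only [cellH, cellS, Sum.inl.injEq, GN.cell.injEq, GCell.mk.injEq,
      Option.some.injEq] at hh
    obtain ⟨hv, hlf, hrf, -⟩ := hh
    obtain ⟨pre', pl, hpre, hx', hC⟩ := G.rowFrom_eq_snoc hx.symm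
    have hplen : pre.length = pre'.length + 1 := by rw [hpre]; simp
    rw [Nat.zero_add] at hC
    rw [G.cellP_mid (by omega)] at hC
    simp only [cellS, Sum.inl.injEq, GN.cell.injEq, GCell.mk.injEq] at hC
    obtain ⟨hq1, hq21, -, -⟩ := hC
    refine Or.inr (Or.inr (Or.inl ⟨pre', pl, v :: suf, ?_, ?_⟩))
    · rw [hpre] at hgood
      have : pre' ++ [pl] ++ v :: suf = pre' ++ pl :: v :: suf := by simp
      rwa [this] at hgood
    · have hlen2 : (pre' ++ pl :: v :: suf).length = n := by
        simp only [List.length_append, List.length_cons]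
        omega
      have e1 : G.cellH n pre'.length pl .back =
          G.cellS pl (decide (pre'.length = 0)) false (some .back) :=
        G.cellH_mid (by omega) pl .back
      have e2 : G.cellP n (pre'.length + 1) v =
          G.cellS v false (decide (pre'.length + 1 + 1 = n)) none := G.cellP_succ v
      rw [hlen2, hx', hy, hv, hq1, hq21, hrf, hplen]
      simp only [rowMid, rowFrom_cons, e1, e2]
      simp
  -- rule 6 live
  · have heq' : x ++ G.cellS q.1 true q.2.1 (some .back) :: y = G.rowFrom n 0 pre ++
        G.cellH n pre.length v .back :: G.rowFrom n (pre.length + 1) suf := by simpa using heq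
    obtain ⟨hx, hh, hy⟩ := G.align hp hq (by simp [plainSym, cellS]) heq'
    simp only [cellH, cellS, Sum.inl.injEq, GN.cell.injEq, GCell.mk.injEq,
      Option.some.injEq] at hh
    obtain ⟨hv, hlf, hrf, -⟩ := hh
    have hpre : pre = [] := List.length_eq_zero_iff.mp (of_decide_eq_true hlf.symm)
    subst hpre
    refine Or.inr (Or.inr (Or.inr (Or.inl ⟨q.2.2, [], [], v, suf, ?_, ?_, ?_, ?_⟩)))
    · simpa using hgood
    · exact List.isChain_singleton _
    · exact List.Forall₂.nil
    · rw [hx, hy, hv, hrf, ← hn]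
      simp [rowMid, cellH, cellS]
  -- rule 7 live
  · have heq' : x ++ G.cellS q.1 true q.2 (some .back) :: y = G.rowFrom n 0 pre ++
        G.cellH n pre.length v .back :: G.rowFrom n (pre.length + 1) suf := by simpa using heq
    obtain ⟨hx, hh, hy⟩ := G.align hp hq (by simp [plainSym, cellS]) heq'
    simp only [cellH, cellS, Sum.inl.injEq, GN.cell.injEq, GCell.mk.injEq,
      Option.some.injEq] at hh
    obtain ⟨hv, hlf, hrf, -⟩ := hh
    have hpre : pre = [] := List.length_eq_zero_iff.mp (of_decide_eq_true hlf.symm)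
    subst hpre
    refine Or.inr (Or.inr (Or.inr (Or.inr (Or.inl ⟨[], v, suf, ?_, ?_⟩))))
    · simpa using hgood
    · rw [hx, hy, hv, hrf, ← hn]
      simp [termRow, cellH, cellS]
  -- rule 8 dead
  · have heq' : x ++ G.cellS q.1 q.2.2.2.2.1 false (some (.rw q.2.2.2.2.2.2 q.2.2.1)) ::
        (G.cellS q.2.2.2.1 false q.2.2.2.2.2.1 none :: y) = G.rowFrom n 0 pre ++
        G.cellH n pre.length v .back :: G.rowFrom n (pre.length + 1) suf := by simpa using heq
    obtain ⟨hx, hh, hy⟩ := G.align hp hq (by simp [plainSym, cellS]) heq'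
    simp [cellH, cellS] at hh
  -- rule 9 dead
  · have heq' : x ++ G.cellS q.1 q.2.2.2.1 true (some (.rw q.2.2.2.2 q.2.2.1)) :: y =
        G.rowFrom n 0 pre ++
        G.cellH n pre.length v .back :: G.rowFrom n (pre.length + 1) suf := by simpa using heq
    obtain ⟨hx, hh, hy⟩ := G.align hp hq (by simp [plainSym, cellS]) heq'
    simp [cellH, cellS] at hh
  -- rule 10 dead
  · have heq' : x ++ G.cellS q.1 q.2.2.1 false (some .fin) ::
        (G.cellS q.2.1 false q.2.2.2 none :: y) = G.rowFrom n 0 pre ++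
        G.cellH n pre.length v .back :: G.rowFrom n (pre.length + 1) suf := by simpa using heq
    obtain ⟨hx, hh, hy⟩ := G.align hp hq (by simp [plainSym, cellS]) heq'
    simp [cellH, cellS] at hh
  -- rule 11 dead
  · have heq' : x ++ G.cellS q.1 q.2 true (some .fin) :: y = G.rowFrom n 0 pre ++
        G.cellH n pre.length v .back :: G.rowFrom n (pre.length + 1) suf := by simpa using heq
    obtain ⟨hx, hh, hy⟩ := G.align hp hq (by simp [plainSym, cellS]) heq'
    simp [cellH, cellS] at hh

end CGame
end Part8
section Part9
namespace CGame
variable {Γ : Type} (G : CGame Γ)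

/-- Step preservation, case: rewriting head. -/
lemma inv_step_rw {n : ℕ} {b : Bool} {us old suf : List G.V} {v : G.V} {x y l r : List G.GSym}
    (hgood : G.GoodI (old ++ v :: suf)) (hn : n = (old ++ v :: suf).length)
    (hch : List.Chain' G.E (G.init :: us))
    (hF : List.Forall₂ (fun a c => G.βb b a = G.βb b c) us old)
    (hP : (l, r) ∈ G.Rules)
    (heq : x ++ l ++ y = G.rowFrom n 0 us ++
      G.cellH n us.length v (.rw b ((G.init :: us).getLast (by simp))) ::
      G.rowFrom n (us.length + 1) suf) :
    G.Inv (x ++ r ++ y) := by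
  have hp : ∀ s ∈ G.rowFrom n 0 us, G.plainSym s := G.plain_rowFrom us 0
  have hq : ∀ s ∈ G.rowFrom n (us.length + 1) suf, G.plainSym s := G.plain_rowFrom suf _
  have huslen : us.length = old.length := hF.length_eq
  have hnval : n = old.length + 1 + suf.length := by
    rw [hn]; simp only [List.length_append, List.length_cons]; omega
  rcases hP with ((((((((((⟨v1, hc, hpair⟩ | ⟨v1, hc, hpair⟩) | ⟨q, hc, hpair⟩) |
    ⟨q, hc, hpair⟩) | ⟨q, -, hpair⟩) | ⟨q, -, hpair⟩) | ⟨q, -, hpair⟩) | ⟨q, hc, hpair⟩) |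
    ⟨q, hc, hpair⟩) | ⟨q, -, hpair⟩) | ⟨q, -, hpair⟩) <;>
  rw [Prod.ext_iff] at hpair <;>
  obtain ⟨hl, hr⟩ := hpair <;>
  simp only [rule1, rule2, rule3, rule4, rule5, rule6, rule7, rule8, rule9, rule10, rule11]
    at hl hr <;>
  subst hl <;> subst hr
  -- rule 1 dead
  · obtain ⟨hx, hh, hy⟩ := G.align hp hq G.not_plain_start (show x ++
      (Sum.inl GN.start : G.GSym) :: y = _ ++ _ :: _ by simpa using heq)
    simp [cellH, cellS] at hh
  -- rule 2 dead
  · obtain ⟨hx, hh, hy⟩ := G.align hp hq G.not_plain_start (show x ++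
      (Sum.inl GN.start : G.GSym) :: y = _ ++ _ :: _ by simpa using heq)
    simp [cellH, cellS] at hh
  -- rule 3 dead
  · obtain ⟨hx, hh, hy⟩ := G.align hp hq (by simp [plainSym, cellS]) (show x ++
      G.cellS q.1 q.2.2 false (some .gen) :: y = _ ++ _ :: _ by simpa using heq)
    simp [cellH, cellS] at hh
  -- rule 4 dead
  · obtain ⟨hx, hh, hy⟩ := G.align hp hq (by simp [plainSym, cellS]) (show x ++
      G.cellS q.1 q.2.2 false (some .gen) :: y = _ ++ _ :: _ by simpa using heq)
    simp [cellH, cellS] at hh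
  -- rule 5 dead
  · obtain ⟨hx, hh, hy⟩ := G.align hp hq (by simp [plainSym, cellS]) (show (x ++
      [G.cellS q.1 q.2.2.1 false none]) ++ G.cellS q.2.1 false q.2.2.2 (some .back) :: y =
      _ ++ _ :: _ by simpa using heq)
    simp [cellH, cellS] at hh
  -- rule 6 dead
  · obtain ⟨hx, hh, hy⟩ := G.align hp hq (by simp [plainSym, cellS]) (show x ++
      G.cellS q.1 true q.2.1 (some .back) :: y = _ ++ _ :: _ by simpa using heq)
    simp [cellH, cellS] at hh
  -- rule 7 dead
  · obtain ⟨hx, hh, hy⟩ := G.align hp hq (by simp [plainSym, cellS]) (show x ++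
      G.cellS q.1 true q.2 (some .back) :: y = _ ++ _ :: _ by simpa using heq)
    simp [cellH, cellS] at hh
  -- rule 8 live
  · obtain ⟨hx, hh, hy⟩ := G.align hp hq (by simp [plainSym, cellS]) (show x ++
      G.cellS q.1 q.2.2.2.2.1 false (some (.rw q.2.2.2.2.2.2 q.2.2.1)) ::
      (G.cellS q.2.2.2.1 false q.2.2.2.2.2.1 none :: y) = _ ++ _ :: _ by simpa using heq)
    simp only [cellH, cellS, Sum.inl.injEq, GN.cell.injEq, GCell.mk.injEq,
      Option.some.injEq, GHead.rw.injEq] at hh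
    obtain ⟨hv, hlflag, hrf, hb, hpp⟩ := hh
    obtain ⟨s, suf', hsuf, hC, hy'⟩ := G.rowFrom_eq_cons hy.symm
    rw [G.cellP_succ] at hC
    simp only [cellS, Sum.inl.injEq, GN.cell.injEq, GCell.mk.injEq] at hC
    obtain ⟨hs, -, hr2, -⟩ := hC
    have hne1 : us.length + 1 ≠ n := of_decide_eq_false hrf.symm
    have hsuflen : suf.length = suf'.length + 1 := by rw [hsuf]; simp
    refine Or.inr (Or.inr (Or.inr (Or.inl ⟨b, us ++ [q.2.1], old ++ [v], s, suf',
      ?_, ?_, ?_, ?_⟩)))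
    · rw [hsuf] at hgood
      have ha : (old ++ [v]) ++ s :: suf' = old ++ v :: s :: suf' := by simp
      rw [ha]
      exact hgood
    · apply G.chain'_snoc hch
      rw [← hpp]
      exact hc.1
    · apply G.forall₂_snoc hF
      rw [← hb, ← hv]
      exact hc.2.symm
    · have hlen2 : ((old ++ [v]) ++ s :: suf').length = n := by
        rw [show (old ++ [v]) ++ s :: suf' = old ++ v :: s :: suf' from by simp, ← hsuf]
        exact hn.symm
      have e1 : G.rowFrom n 0 (us ++ [q.2.1]) = G.rowFrom n 0 us ++
          [G.cellS q.2.1 (decide (us.length = 0)) false none] := by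
        rw [G.rowFrom_append]
        simp only [Nat.zero_add, rowFrom_cons, rowFrom_nil]
        rw [G.cellP_mid hne1]
      have e2 : G.cellH n (us ++ [q.2.1]).length s
          (.rw b ((G.init :: (us ++ [q.2.1])).getLast (by simp))) =
          G.cellS s false (decide (us.length + 1 + 1 = n)) (some (.rw b q.2.1)) := by
        rw [List.length_append, List.length_singleton, G.getLast_snoc]
        exact G.cellH_succ s _
      rw [hlen2, hx, hy', hs, hb, hr2, hlflag]
      simp only [rowMid]
      rw [e1, e2]
      simp
  -- rule 9 live
  · obtain ⟨hx, hh, hy⟩ := G.align hp hq (by simp [plainSym, cellS]) (show x ++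
      G.cellS q.1 q.2.2.2.1 true (some (.rw q.2.2.2.2 q.2.2.1)) :: y =
      _ ++ _ :: _ by simpa using heq)
    simp only [cellH, cellS, Sum.inl.injEq, GN.cell.injEq, GCell.mk.injEq,
      Option.some.injEq, GHead.rw.injEq] at hh
    obtain ⟨hv, hlflag, hrt, hb, hpp⟩ := hh
    have hn1 : us.length + 1 = n := of_decide_eq_true hrt.symm
    have hsuf : suf = [] := List.length_eq_zero_iff.mp (by omega)
    subst hsuf
    refine Or.inr (Or.inr (Or.inl ⟨us, q.2.1, [], ?_, ?_⟩))
    · have hgood' : G.GoodI (old ++ [v]) := hgood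
      have := G.goodI_rw hgood' hch (by rw [← hpp]; exact hc.1) hF
        (by rw [← hb, ← hv]; exact hc.2.1.symm) hc.2.2
      simpa using this
    · have hlen2 : (us ++ q.2.1 :: []).length = n := by
        simp only [List.length_append, List.length_cons, List.length_nil]
        omega
      have e1 : G.cellH n us.length q.2.1 .back =
          G.cellS q.2.1 (decide (us.length = 0)) true (some .back) :=
        G.cellH_last hn1 _ _
      rw [hlen2, hx, hy, hlflag]
      simp only [rowMid, rowFrom_nil, e1]
      simp
  -- rule 10 dead
  · obtain ⟨hx, hh, hy⟩ := G.align hp hq (by simp [plainSym, cellS]) (show x ++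
      G.cellS q.1 q.2.2.1 false (some .fin) :: (G.cellS q.2.1 false q.2.2.2 none :: y) =
      _ ++ _ :: _ by simpa using heq)
    simp [cellH, cellS] at hh
  -- rule 11 dead
  · obtain ⟨hx, hh, hy⟩ := G.align hp hq (by simp [plainSym, cellS]) (show x ++
      G.cellS q.1 q.2 true (some .fin) :: y = _ ++ _ :: _ by simpa using heq)
    simp [cellH, cellS] at hh

/-- Step preservation, case: finalisation head. -/
lemma inv_step_fin {n : ℕ} {pre suf : List G.V} {v : G.V} {x y l r : List G.GSym}
    (hgood : G.GoodI (pre ++ v :: suf)) (hn : n = (pre ++ v :: suf).length)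
    (hP : (l, r) ∈ G.Rules)
    (heq : x ++ l ++ y = G.termRow pre ++ G.cellH n pre.length v .fin ::
      G.rowFrom n (pre.length + 1) suf) :
    G.Inv (x ++ r ++ y) := by
  have hp : ∀ s ∈ G.termRow pre, G.plainSym s := G.plain_termRow pre
  have hq : ∀ s ∈ G.rowFrom n (pre.length + 1) suf, G.plainSym s := G.plain_rowFrom suf _
  have hnval : n = pre.length + 1 + suf.length := by
    rw [hn]; simp only [List.length_append, List.length_cons]; omega
  rcases hP with ((((((((((⟨v1, hc, hpair⟩ | ⟨v1, hc, hpair⟩) | ⟨q, hc, hpair⟩) |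
    ⟨q, hc, hpair⟩) | ⟨q, -, hpair⟩) | ⟨q, -, hpair⟩) | ⟨q, -, hpair⟩) | ⟨q, hc, hpair⟩) |
    ⟨q, hc, hpair⟩) | ⟨q, -, hpair⟩) | ⟨q, -, hpair⟩) <;>
  rw [Prod.ext_iff] at hpair <;>
  obtain ⟨hl, hr⟩ := hpair <;>
  simp only [rule1, rule2, rule3, rule4, rule5, rule6, rule7, rule8, rule9, rule10, rule11]
    at hl hr <;>
  subst hl <;> subst hr
  -- rule 1 dead
  · obtain ⟨hx, hh, hy⟩ := G.align hp hq G.not_plain_start (show x ++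
      (Sum.inl GN.start : G.GSym) :: y = _ ++ _ :: _ by simpa using heq)
    simp [cellH, cellS] at hh
  -- rule 2 dead
  · obtain ⟨hx, hh, hy⟩ := G.align hp hq G.not_plain_start (show x ++
      (Sum.inl GN.start : G.GSym) :: y = _ ++ _ :: _ by simpa using heq)
    simp [cellH, cellS] at hh
  -- rule 3 dead
  · obtain ⟨hx, hh, hy⟩ := G.align hp hq (by simp [plainSym, cellS]) (show x ++
      G.cellS q.1 q.2.2 false (some .gen) :: y = _ ++ _ :: _ by simpa using heq)
    simp [cellH, cellS] at hh
  -- rule 4 dead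
  · obtain ⟨hx, hh, hy⟩ := G.align hp hq (by simp [plainSym, cellS]) (show x ++
      G.cellS q.1 q.2.2 false (some .gen) :: y = _ ++ _ :: _ by simpa using heq)
    simp [cellH, cellS] at hh
  -- rule 5 dead
  · obtain ⟨hx, hh, hy⟩ := G.align hp hq (by simp [plainSym, cellS]) (show (x ++
      [G.cellS q.1 q.2.2.1 false none]) ++ G.cellS q.2.1 false q.2.2.2 (some .back) :: y =
      _ ++ _ :: _ by simpa using heq)
    simp [cellH, cellS] at hh
  -- rule 6 dead
  · obtain ⟨hx, hh, hy⟩ := G.align hp hq (by simp [plainSym, cellS]) (show x ++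
      G.cellS q.1 true q.2.1 (some .back) :: y = _ ++ _ :: _ by simpa using heq)
    simp [cellH, cellS] at hh
  -- rule 7 dead
  · obtain ⟨hx, hh, hy⟩ := G.align hp hq (by simp [plainSym, cellS]) (show x ++
      G.cellS q.1 true q.2 (some .back) :: y = _ ++ _ :: _ by simpa using heq)
    simp [cellH, cellS] at hh
  -- rule 8 dead
  · obtain ⟨hx, hh, hy⟩ := G.align hp hq (by simp [plainSym, cellS]) (show x ++
      G.cellS q.1 q.2.2.2.2.1 false (some (.rw q.2.2.2.2.2.2 q.2.2.1)) ::
      (G.cellS q.2.2.2.1 false q.2.2.2.2.2.1 none :: y) = _ ++ _ :: _ by simpa using heq)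
    simp [cellH, cellS] at hh
  -- rule 9 dead
  · obtain ⟨hx, hh, hy⟩ := G.align hp hq (by simp [plainSym, cellS]) (show x ++
      G.cellS q.1 q.2.2.2.1 true (some (.rw q.2.2.2.2 q.2.2.1)) :: y =
      _ ++ _ :: _ by simpa using heq)
    simp [cellH, cellS] at hh
  -- rule 10 live
  · obtain ⟨hx, hh, hy⟩ := G.align hp hq (by simp [plainSym, cellS]) (show x ++
      G.cellS q.1 q.2.2.1 false (some .fin) :: (G.cellS q.2.1 false q.2.2.2 none :: y) =
      _ ++ _ :: _ by simpa using heq)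
    simp only [cellH, cellS, Sum.inl.injEq, GN.cell.injEq, GCell.mk.injEq,
      Option.some.injEq] at hh
    obtain ⟨hv, hlflag, hrf, -⟩ := hh
    obtain ⟨s, suf', hsuf, hC, hy'⟩ := G.rowFrom_eq_cons hy.symm
    rw [G.cellP_succ] at hC
    simp only [cellS, Sum.inl.injEq, GN.cell.injEq, GCell.mk.injEq] at hC
    obtain ⟨hs, -, hr2, -⟩ := hC
    refine Or.inr (Or.inr (Or.inr (Or.inr (Or.inl ⟨pre ++ [v], s, suf', ?_, ?_⟩))))
    · rw [hsuf] at hgood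
      have ha : (pre ++ [v]) ++ s :: suf' = pre ++ v :: s :: suf' := by simp
      rw [ha]
      exact hgood
    · have hsuflen : suf.length = suf'.length + 1 := by rw [hsuf]; simp
      have hlen2 : ((pre ++ [v]) ++ s :: suf').length = n := by
        rw [show (pre ++ [v]) ++ s :: suf' = pre ++ v :: s :: suf' from by simp, ← hsuf]
        exact hn.symm
      have e0 : G.termRow (pre ++ [v]) = G.termRow pre ++ [Sum.inr (G.β1 v)] := by
        simp [termRow]
      have e2 : G.cellH n (pre ++ [v]).length s .fin =
          G.cellS s false (decide (pre.length + 1 + 1 = n)) (some .fin) := by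
        rw [List.length_append, List.length_singleton]
        exact G.cellH_succ s _
      rw [hlen2, hx, hy', hv, hs, hr2, e0, e2]
      simp
  -- rule 11 live
  · obtain ⟨hx, hh, hy⟩ := G.align hp hq (by simp [plainSym, cellS]) (show x ++
      G.cellS q.1 q.2 true (some .fin) :: y = _ ++ _ :: _ by simpa using heq)
    simp only [cellH, cellS, Sum.inl.injEq, GN.cell.injEq, GCell.mk.injEq,
      Option.some.injEq] at hh
    obtain ⟨hv, hlflag, hrt, -⟩ := hh
    have hn1 : pre.length + 1 = n := of_decide_eq_true hrt.symm
    have hsuf : suf = [] := List.length_eq_zero_iff.mp (by omega)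
    subst hsuf
    refine Or.inr (Or.inr (Or.inr (Or.inr (Or.inr ⟨pre ++ [v], hgood, ?_⟩))))
    rw [hx, hy, hv]
    simp [termRow]

end CGame
end Part9
section Part10
namespace CGame
variable {Γ : Type} (G : CGame Γ)

/-- The invariant is preserved by grammar steps. -/
lemma inv_step {u w : List G.GSym} (hs : GrammarStep G.Rules u w) (hu : G.Inv u) : G.Inv w := by
  obtain ⟨x, y, l, r, hP, hueq, hweq⟩ := hs
  subst hweq
  rw [hueq] at hu
  clear hueq
  rcases hu with h0 | ⟨pre, v, hch, hform⟩ | ⟨pre, v, suf, hgood, hform⟩ |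
    ⟨b, us, old, v, suf, hgood, hch, hF, hform⟩ | ⟨pre, v, suf, hgood, hform⟩ |
    ⟨vs, hgood, hform⟩
  · exact G.inv_step_start hP h0
  · exact G.inv_step_gen hch hP hform
  · simp only [rowMid] at hform
    exact G.inv_step_back hgood rfl hP hform
  · simp only [rowMid] at hform
    exact G.inv_step_rw hgood rfl hch hF hP hform
  · exact G.inv_step_fin hgood rfl hP hform
  · exact absurd hform (fun hform => G.inv_step_term hP hform)

lemma inv_of_deriv {w : List G.GSym} (h : G.Deriv [Sum.inl GN.start] w) : G.Inv w := by
  induction h with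
  | refl => exact Or.inl rfl
  | tail _ hstep ih => exact G.inv_step hstep ih

/-- Soundness: derivable words are accepted observation words. -/
lemma sound {w : List Γ} (h : G.Deriv [Sum.inl GN.start] (w.map Sum.inr)) :
    ∃ π, G.IsPlay π ∧ G.obs1 π = w ∧ G.Acc π := by
  have hinv := G.inv_of_deriv h
  rcases hinv with h0 | ⟨pre, v, hch, hform⟩ | ⟨pre, v, suf, hgood, hform⟩ |
    ⟨b, us, old, v, suf, hgood, hch, hF, hform⟩ | ⟨pre, v, suf, hgood, hform⟩ |
    ⟨vs, hgood, hform⟩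
  · have : (Sum.inl GN.start : G.GSym) ∈ w.map Sum.inr := by rw [h0]; simp
    simp at this
  · have : G.cellH 0 pre.length v .gen ∈ w.map Sum.inr := by rw [hform]; simp
    simp [cellH, cellS] at this
  · have : G.cellH (pre ++ v :: suf).length pre.length v .back ∈ w.map Sum.inr := by
      rw [hform]; simp [rowMid]
    simp [cellH, cellS] at this
  · have : G.cellH (old ++ v :: suf).length us.length v
        (.rw b ((G.init :: us).getLast (by simp))) ∈ w.map Sum.inr := by
      rw [hform]; simp [rowMid]
    simp [cellH, cellS] at this
  · have : G.cellH (pre ++ v :: suf).length pre.length v .fin ∈ w.map Sum.inr := by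
      rw [hform]; simp
    simp [cellH, cellS] at this
  · have hw : w = vs.map G.β1 := by
      have h2 : w.map (Sum.inr : Γ → G.GSym) = (vs.map G.β1).map (Sum.inr : Γ → G.GSym) := by
        rw [hform]
        simp [termRow]
      exact List.map_injective_iff.mpr Sum.inr_injective h2
    obtain ⟨f, hplay, hacc⟩ := hgood
    exact ⟨G.playOf vs f, hplay, by rw [G.obs1_playOf, hw], hacc⟩

end CGame
end Part10

/-- Every solvable consensus game acceptor admits a winning
strategy implementable by a nondeterministic linear-bounded automaton, i.e.
(by Kuroda's theorem) a winning observation-based strategy whose language of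
accepted observation sequences is context-sensitive. -/
theorem solvable_admits_contextSensitive_strategy {Γ : Type} [Finite Γ]
    (G : CGame Γ) (h : G.Solvable) :
    ∃ t : List Γ → Bool, G.ObsWinning t ∧ ContextSensitive {w | t w = true} := by
  refine ⟨G.tacc, G.tacc_obsWinning h, ?_⟩
  refine ⟨GN G.V, inferInstance, GN.start, G.Rules, G.rules_finite, G.rules_format, ?_⟩
  intro w hw
  rw [Set.mem_setOf_eq, G.tacc_true_iff]
  constructor
  · intro hmem
    exact G.complete hmem hw
  · intro hd
    exact G.sound hd
end

section
/- For every consensus game acceptor, the seed languages L_acc and L_rej are regular, and the seed relation R is recognised by a synchronous (letter-to-letter) transducer. -/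
/-! ## Synchronous (letter-to-letter) transducers and regular languages. -/

/-- A synchronous transducer: a finite two-tape automaton whose transitions are
labelled by pairs of letters. -/
structure Transducer (Γ : Type) where
  Q : Type
  fintypeQ : Fintype Q
  q0 : Q
  F : Set Q
  Δ : Q → Γ → Γ → Q → Prop

namespace Transducer

/-- Runs of a transducer. -/
inductive Run {Γ : Type} (T : Transducer Γ) : T.Q → List Γ → List Γ → T.Q → Prop
  | nil (q : T.Q) : Run T q [] [] q
  | cons {p q r : T.Q} {a b : Γ} {u w : List Γ} :
      T.Δ p a b q → Run T q u w r → Run T p (a :: u) (b :: w) r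

/-- The synchronous relation recognised by a transducer. -/
def rel {Γ : Type} (T : Transducer Γ) : Set (List Γ × List Γ) :=
  {p | ∃ qf ∈ T.F, T.Run T.q0 p.1 p.2 qf}

end Transducer

/-- A language is regular if it is accepted by a finite DFA. -/
def RegularSet {Γ : Type} (L : Set (List Γ)) : Prop :=
  ∃ (Q : Type) (_ : Fintype Q) (M : DFA Γ Q), M.accepts = L

namespace CGame

variable {Γ : Type} (G : CGame Γ)

/-- The vertex represented by an `Option` state (`none` = the initial state). -/
def src (u : Option G.V) : G.V := u.getD G.init

@[simp] lemma src_none : G.src none = G.init := rfl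
@[simp] lemma src_some (v : G.V) : G.src (some v) = v := rfl

lemma isPlay_iff (π : List G.V) :
    G.IsPlay π ↔ ∃ l f, π = G.init :: (l ++ [f]) ∧
      List.Chain' G.E (G.init :: (l ++ [f])) ∧ G.IsFinal f := by
  constructor
  · rintro ⟨hlen, hhead, hchain, hlast⟩
    cases π with
    | nil => simp at hlen
    | cons v rest =>
      have hv : v = G.init := by simpa using hhead
      subst hv
      have hne : rest ≠ [] := by
        intro h; subst h; simp at hlen
      set f := rest.getLast hne with hf
      have hrest : rest = rest.dropLast ++ [f] := (List.dropLast_append_getLast hne).symm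
      refine ⟨rest.dropLast, f, by rw [← hrest], by rw [← hrest]; exact hchain, ?_⟩
      apply hlast
      rw [hrest]
      show ((G.init :: rest.dropLast) ++ [f]).getLast? = some f
      exact List.getLast?_concat
  · rintro ⟨l, f, rfl, hch, hfin⟩
    refine ⟨by simp, rfl, hch, ?_⟩
    intro v hv
    have : ((G.init :: l) ++ [f]).getLast? = some f := List.getLast?_concat
    rw [show G.init :: (l ++ [f]) = (G.init :: l) ++ [f] from rfl, this] at hv
    cases hv
    exact hfin

lemma obs1_eq (l : List G.V) (f : G.V) :
    G.obs1 (G.init :: (l ++ [f])) = l.map G.β1 := by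
  simp [obs1, List.dropLast_concat]

lemma obs2_eq (l : List G.V) (f : G.V) :
    G.obs2 (G.init :: (l ++ [f])) = l.map G.β2 := by
  simp [obs2, List.dropLast_concat]

lemma omegaP_eq (l : List G.V) (f : G.V) :
    G.OmegaP (G.init :: (l ++ [f])) = G.Ω f := by
  have hlast : ((G.init :: l) ++ [f]).getLast? = some f := List.getLast?_concat
  ext a
  constructor
  · rintro ⟨v, hv, ha⟩
    rw [show (G.init :: (l ++ [f])).getLast? = ((G.init :: l) ++ [f]).getLast? from rfl,
      hlast] at hv
    cases hv
    exact ha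
  · intro ha
    exact ⟨f, hlast, ha⟩

/-- NFA over player-1 observations, accepting observation sequences of plays
whose admissible-decision set is `P`. -/
def nfaP (P : Set Bool) : NFA Γ (Option G.V) where
  step u a := {q | ∃ v, q = some v ∧ G.E (G.src u) v ∧ G.β1 v = a}
  start := {none}
  accept := {u | ∃ f, G.E (G.src u) f ∧ G.IsFinal f ∧ G.Ω f = P}

lemma nfaP_eval (P : Set Bool) (w : List Γ) : ∀ S : Set (Option G.V),
    (∃ q ∈ (G.nfaP P).accept, q ∈ (G.nfaP P).evalFrom S w) ↔
    (∃ u ∈ S, ∃ l f, w = l.map G.β1 ∧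
      List.Chain' G.E (G.src u :: (l ++ [f])) ∧ G.IsFinal f ∧ G.Ω f = P) := by
  induction w with
  | nil =>
    intro S
    constructor
    · rintro ⟨q, ⟨f, hE, hfin, hΩ⟩, hq⟩
      exact ⟨q, hq, [], f, rfl, by simpa [List.Chain'] using hE, hfin, hΩ⟩
    · rintro ⟨u, hu, l, f, hl, hch, hfin, hΩ⟩
      have hl0 : l = [] := by
        cases l with
        | nil => rfl
        | cons a l => simp at hl
      subst hl0
      have hE : G.E (G.src u) f := by simpa [List.Chain'] using hch
      exact ⟨u, ⟨f, hE, hfin, hΩ⟩, hu⟩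
  | cons a w ih =>
    intro S
    rw [show (G.nfaP P).evalFrom S (a :: w)
        = (G.nfaP P).evalFrom ((G.nfaP P).stepSet S a) w from rfl, ih]
    constructor
    · rintro ⟨q, hq, l, f, hl, hch, hfin, hΩ⟩
      rw [NFA.mem_stepSet] at hq
      obtain ⟨u, hu, v, rfl, hE, hβ⟩ := hq
      refine ⟨u, hu, v :: l, f, by simp [hβ, hl], ?_, hfin, hΩ⟩
      exact List.isChain_cons_cons.mpr ⟨hE, by simpa [List.Chain'] using hch⟩
    · rintro ⟨u, hu, l, f, hl, hch, hfin, hΩ⟩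
      cases l with
      | nil => simp at hl
      | cons v l =>
        rw [List.map_cons] at hl
        obtain ⟨ha, hw⟩ := List.cons_eq_cons.mp hl
        obtain ⟨hE, hch2⟩ := List.isChain_cons_cons.mp hch
        refine ⟨some v, ?_, l, f, hw, by simpa [List.Chain'] using hch2, hfin, hΩ⟩
        rw [NFA.mem_stepSet]
        exact ⟨u, hu, v, rfl, hE, ha.symm⟩

lemma nfaP_accepts (P : Set Bool) :
    (G.nfaP P).accepts = {w | ∃ π, G.IsPlay π ∧ G.obs1 π = w ∧ G.OmegaP π = P} := by
  ext w
  rw [NFA.mem_accepts]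
  rw [G.nfaP_eval P w]
  constructor
  · rintro ⟨u, hu, l, f, hl, hch, hfin, hΩ⟩
    have hu' : u = none := hu
    subst hu'
    exact ⟨G.init :: (l ++ [f]),
      (G.isPlay_iff _).mpr ⟨l, f, rfl, by simpa using hch, hfin⟩,
      by rw [G.obs1_eq, hl], by rw [G.omegaP_eq, hΩ]⟩
  · rintro ⟨π, hπ, hobs, hΩ⟩
    obtain ⟨l, f, rfl, hch, hfin⟩ := (G.isPlay_iff π).mp hπ
    refine ⟨none, rfl, l, f, ?_, by simpa using hch, hfin, ?_⟩
    · rw [← hobs, G.obs1_eq]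
    · rw [← hΩ, G.omegaP_eq]

/-- Synchronous transducer recognising the seed relation. -/
def trans : Transducer Γ where
  Q := Option G.V
  fintypeQ := @instFintypeOption _ G.fintypeV
  q0 := none
  F := {u | ∃ f, G.E (G.src u) f ∧ G.IsFinal f}
  Δ u a b q := ∃ v, q = some v ∧ G.E (G.src u) v ∧ G.β1 v = a ∧ G.β2 v = b

lemma trans_run_fwd {u : Option G.V} {w1 w2 : List Γ} {qf : Option G.V}
    (hrun : G.trans.Run u w1 w2 qf) (hqf : qf ∈ G.trans.F) :
    ∃ l f, w1 = l.map G.β1 ∧ w2 = l.map G.β2 ∧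
      List.Chain' G.E (G.src u :: (l ++ [f])) ∧ G.IsFinal f := by
  refine Transducer.Run.rec (motive := fun u w1 w2 qf _ => qf ∈ G.trans.F → ∃ l f,
    w1 = l.map G.β1 ∧ w2 = l.map G.β2 ∧ List.Chain' G.E (G.src u :: (l ++ [f])) ∧ G.IsFinal f)
    ?_ ?_ hrun hqf
  · intro q hqf
    obtain ⟨f, hE, hfin⟩ := hqf
    exact ⟨[], f, rfl, rfl, by simpa [List.Chain'] using hE, hfin⟩
  · intro p q r a b u w hΔ hrun ih hqf
    obtain ⟨l, f, h1, h2, hch, hfin⟩ := ih hqf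
    obtain ⟨v, rfl, hE, hβ1, hβ2⟩ := hΔ
    exact ⟨v :: l, f, by simp [hβ1, h1], by simp [hβ2, h2],
      List.isChain_cons_cons.mpr ⟨hE, by simpa [List.Chain'] using hch⟩, hfin⟩

lemma trans_run_iff (u : Option G.V) (w1 w2 : List Γ) :
    (∃ qf ∈ G.trans.F, G.trans.Run u w1 w2 qf) ↔
    ∃ l f, w1 = l.map G.β1 ∧ w2 = l.map G.β2 ∧
      List.Chain' G.E (G.src u :: (l ++ [f])) ∧ G.IsFinal f := by
  constructor
  · rintro ⟨qf, hqf, hrun⟩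
    exact G.trans_run_fwd hrun hqf
  · rintro ⟨l, f, rfl, rfl, hch, hfin⟩
    induction l generalizing u with
    | nil =>
      have hE : G.E (G.src u) f := by simpa [List.Chain'] using hch
      refine ⟨u, ⟨f, hE, hfin⟩, ?_⟩
      show G.trans.Run u [] [] u
      exact Transducer.Run.nil (T := G.trans) u
    | cons v l ih =>
      obtain ⟨hE, hch2⟩ := List.isChain_cons_cons.mp hch
      obtain ⟨qf, hqf, hrun⟩ := ih (some v) (by simpa [List.Chain'] using hch2)
      exact ⟨qf, hqf, Transducer.Run.cons ⟨v, rfl, hE, rfl, rfl⟩ hrun⟩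

lemma trans_rel : G.trans.rel = G.seedRel := by
  ext p
  obtain ⟨w1, w2⟩ := p
  show (∃ qf ∈ G.trans.F, G.trans.Run G.trans.q0 w1 w2 qf) ↔ _
  rw [show (G.trans.q0 : Option G.V) = none from rfl, G.trans_run_iff none w1 w2]
  constructor
  · rintro ⟨l, f, rfl, rfl, hch, hfin⟩
    exact ⟨G.init :: (l ++ [f]),
      (G.isPlay_iff _).mpr ⟨l, f, rfl, by simpa using hch, hfin⟩,
      (G.obs1_eq l f).symm, (G.obs2_eq l f).symm⟩
  · rintro ⟨π, hπ, h1, h2⟩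
    dsimp only at h1 h2
    obtain ⟨l, f, rfl, hch, hfin⟩ := (G.isPlay_iff _).mp hπ
    exact ⟨l, f, by rw [h1, G.obs1_eq], by rw [h2, G.obs2_eq], by simpa using hch, hfin⟩

end CGame

/-- For every consensus game, the seed languages `L_acc` and
`L_rej` are regular and the seed relation is recognised by a synchronous
transducer. -/
theorem seed_regular_and_synchronous {Γ : Type} (G : CGame Γ) :
    RegularSet G.LaccSet ∧ RegularSet G.LrejSet ∧
      ∃ T : Transducer Γ, T.rel = G.seedRel := by
  haveI := G.fintypeV
  refine ⟨⟨Set (Option G.V), Fintype.ofFinite _, (G.nfaP {true}).toDFA, ?_⟩,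
    ⟨Set (Option G.V), Fintype.ofFinite _, (G.nfaP {false}).toDFA, ?_⟩,
    G.trans, G.trans_rel⟩
  · rw [NFA.toDFA_correct, G.nfaP_accepts]; rfl
  · rw [NFA.toDFA_correct, G.nfaP_accepts]; rfl
end

section
/- For a consensus game G with seed relation R and reflection τ := R R⁻¹, (i) τ = {(β¹(π), β¹(π')) : plays π ~² π'}, and (ii) τ* = (∩Γ*) ∪ {(β¹(π), β¹(π')) : plays π ~* π'}. -/
/-! ## Operations on word relations. -/

/-- Composition of word relations. -/
def RelComp {α : Type} (S S' : Set (List α × List α)) : Set (List α × List α) :=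
  {p | ∃ z, (p.1, z) ∈ S ∧ (z, p.2) ∈ S'}

/-- Inverse of a word relation. -/
def RelInv {α : Type} (S : Set (List α × List α)) : Set (List α × List α) :=
  {p | (p.2, p.1) ∈ S}

/-- Reflexive-transitive iteration `S*` of a word relation. -/
def RelStar {α : Type} (S : Set (List α × List α)) : Set (List α × List α) :=
  {p | Relation.ReflTransGen (fun x y => (x, y) ∈ S) p.1 p.2}

/-- Image `S L = { x | (x,y) ∈ S for some y ∈ L }`. -/
def RelImage {α : Type} (S : Set (List α × List α)) (L : Set (List α)) : Set (List α) :=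
  {x | ∃ y, (x, y) ∈ S ∧ y ∈ L}

/-- Reflection `τ(R) := R R⁻¹`. -/
def Reflection {α : Type} (S : Set (List α × List α)) : Set (List α × List α) :=
  RelComp S (RelInv S)

/-- For the seed relation `R` of a game and its reflection
`τ = R R⁻¹`: (i) `τ` relates exactly the player-1 observations of plays
indistinguishable to player 2, and (ii) `τ*` is the identity together with the
pairs of player-1 observations of connected plays. -/
theorem reflection_characterisation {Γ : Type} (G : CGame Γ) :
    Reflection G.seedRel =
        {p | ∃ π π', G.Ind2 π π' ∧ p.1 = G.obs1 π ∧ p.2 = G.obs1 π'} ∧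
      RelStar (Reflection G.seedRel) =
        {p : List Γ × List Γ | p.1 = p.2} ∪
          {p | ∃ π π', G.IsPlay π ∧ G.IsPlay π' ∧ G.Connected π π' ∧
            p.1 = G.obs1 π ∧ p.2 = G.obs1 π'} := by
  have htau : Reflection G.seedRel =
      {p | ∃ π π', G.Ind2 π π' ∧ p.1 = G.obs1 π ∧ p.2 = G.obs1 π'} := by
    ext ⟨x, y⟩
    constructor
    · rintro ⟨z, ⟨π, hπ, hx, hz⟩, ⟨π', hπ', hy, hz'⟩⟩
      exact ⟨π, π', ⟨hπ, hπ', by rw [← hz, ← hz']⟩, hx, hy⟩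
    · rintro ⟨π, π', ⟨hπ, hπ', hobs⟩, hx, hy⟩
      exact ⟨G.obs2 π, ⟨π, hπ, hx, rfl⟩, ⟨π', hπ', hy, hobs⟩⟩
  refine ⟨htau, ?_⟩
  ext ⟨x, y⟩
  constructor
  · intro h
    simp only [RelStar, Set.mem_setOf_eq] at h
    induction h with
    | refl => exact Or.inl rfl
    | tail hab hbc ih =>
      rw [htau] at hbc
      obtain ⟨ρ, ρ', ⟨hρ, hρ', hρρ⟩, hb, hc⟩ := hbc
      rcases ih with h | ⟨π, π', hπ, hπ', hconn, hx, hb'⟩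
      · exact Or.inr ⟨ρ, ρ', hρ, hρ', Relation.ReflTransGen.single
          (Or.inr ⟨hρ, hρ', hρρ⟩), h ▸ hb, hc⟩
      · refine Or.inr ⟨π, ρ', hπ, hρ', ?_, hx, hc⟩
        exact Relation.ReflTransGen.tail
          (Relation.ReflTransGen.tail hconn (Or.inl ⟨hπ', hρ, hb'.symm.trans hb⟩))
          (Or.inr ⟨hρ, hρ', hρρ⟩)
  · rintro (h | ⟨π, π', hπ, hπ', hconn, hx, hy⟩)
    · simp only [Set.mem_setOf_eq] at h
      subst h; exact Relation.ReflTransGen.refl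
    · subst hx; subst hy
      clear hπ hπ'
      induction hconn with
      | refl => exact Relation.ReflTransGen.refl
      | tail hab hbc ih =>
        rcases hbc with ⟨h1, h2, hobs⟩ | hind2
        · rwa [← hobs]
        · exact Relation.ReflTransGen.tail ih
            (htau ▸ ⟨_, _, hind2, rfl, rfl⟩)
end

section
/- Let G be a consensus game with seed (R, L_acc, L_rej) and τ := R R⁻¹. Then G is solvable if and only if τ* L_acc ∩ τ* L_rej = ∅. -/
/-- A consensus game with seed `(R, L_acc, L_rej)` and
reflection `τ = R R⁻¹` is solvable iff `τ* L_acc ∩ τ* L_rej = ∅`. -/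
theorem solvable_iff_disjoint_images {Γ : Type} (G : CGame Γ) :
    G.Solvable ↔
      RelImage (RelStar (Reflection G.seedRel)) G.LaccSet ∩
        RelImage (RelStar (Reflection G.seedRel)) G.LrejSet = ∅ := by
  classical
  constructor
  · rintro ⟨s1, s2, hs1, hs2, hw⟩
    rw [Set.eq_empty_iff_forall_notMem]
    rintro x ⟨⟨y1, hxy1, hy1⟩, ⟨y2, hxy2, hy2⟩⟩
    have key : ∀ (y : List Γ) (πy : List G.V), G.IsPlay πy → G.obs1 πy = y →
        ∀ x : List Γ,
          Relation.ReflTransGen (fun a b => (a, b) ∈ Reflection G.seedRel) x y →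
          ∃ πx, G.IsPlay πx ∧ G.obs1 πx = x ∧ s1 πx = s1 πy := by
      intro y πy hπy hobs x h
      induction h using Relation.ReflTransGen.head_induction_on with
      | refl => exact ⟨πy, hπy, hobs, rfl⟩
      | head hstep _ ih =>
        obtain ⟨πz, hπz, hz, heq⟩ := ih
        obtain ⟨u, ⟨α, hα, hα1, hα2⟩, ⟨β, hβ, hβ1, hβ2⟩⟩ := hstep
        refine ⟨α, hα, hα1.symm, ?_⟩
        have e1 : s1 α = s2 α := (hw α hα).1
        have e2 : s2 α = s2 β := hs2 α β ⟨hα, hβ, by rw [← hα2, ← hβ2]⟩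
        have e3 : s2 β = s1 β := ((hw β hβ).1).symm
        have e4 : s1 β = s1 πz := hs1 β πz ⟨hβ, hπz, by rw [← hβ1, hz]⟩
        rw [e1, e2, e3, e4, heq]
    obtain ⟨π1, hπ1, ho1, hΩ1⟩ := hy1
    obtain ⟨π2, hπ2, ho2, hΩ2⟩ := hy2
    have hv1 : s1 π1 = true := by
      have := (hw π1 hπ1).2; rw [hΩ1] at this; exact this
    have hv2 : s1 π2 = false := by
      have := (hw π2 hπ2).2; rw [hΩ2] at this; exact this
    obtain ⟨πa, hπa, hoa, ha⟩ := key y1 π1 hπ1 ho1 x hxy1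
    obtain ⟨πb, hπb, hob, hb⟩ := key y2 π2 hπ2 ho2 x hxy2
    have : s1 πa = s1 πb := hs1 πa πb ⟨hπa, hπb, by rw [hoa, hob]⟩
    rw [ha, hb, hv1, hv2] at this
    exact Bool.noConfusion this
  · intro hdisj
    set A1 := RelImage (RelStar (Reflection G.seedRel)) G.LaccSet with hA1
    refine ⟨fun π => decide (G.obs1 π ∈ A1),
      fun π => decide (∃ w ∈ A1, (w, G.obs2 π) ∈ G.seedRel), ?_, ?_, ?_⟩
    · rintro π π' ⟨-, -, h⟩; dsimp only; rw [h]
    · rintro π π' ⟨-, -, h⟩; dsimp only; rw [h]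
    · intro π hπ
      -- the final state
      have hne : π ≠ [] := by
        intro h; rw [h] at hπ; exact absurd hπ.1 (by simp)
      set v := π.getLast hne with hv
      have hlast : π.getLast? = some v := List.getLast?_eq_getLast hne
      have hfin : G.IsFinal v := hπ.2.2.2 v hlast
      have hΩne : (G.Ω v).Nonempty := G.Ω_ne v hfin
      have hmem : ∀ a : Bool, a ∈ G.OmegaP π ↔ a ∈ G.Ω v := by
        intro a
        constructor
        · rintro ⟨v', hv', ha⟩
          rw [hlast] at hv'; injection hv' with h; rw [h]; exact ha
        · intro ha; exact ⟨v, hlast, ha⟩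
      -- equivalence of the two strategies on this play
      have hiff : (G.obs1 π ∈ A1) ↔ (∃ w ∈ A1, (w, G.obs2 π) ∈ G.seedRel) := by
        constructor
        · intro h; exact ⟨G.obs1 π, h, ⟨π, hπ, rfl, rfl⟩⟩
        · rintro ⟨w, hwA, hwR⟩
          obtain ⟨y, hty, hyL⟩ := hwA
          refine ⟨y, ?_, hyL⟩
          exact Relation.ReflTransGen.head
            ⟨G.obs2 π, ⟨π, hπ, rfl, rfl⟩, hwR⟩ hty
      constructor
      · simp only [decide_eq_decide]; exact hiff
      · by_cases hcase : G.obs1 π ∈ A1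
        · simp only [hcase, decide_true]
          rw [hmem true]
          by_contra htrue
          -- then Ω v = {false}, so obs1 π ∈ Lrej
          have hΩeq : G.OmegaP π = {false} := by
            ext a
            rw [hmem a]
            constructor
            · intro ha
              cases a with
              | false => rfl
              | true => exact absurd ha htrue
            · rintro rfl
              obtain ⟨b, hb⟩ := hΩne
              cases b with
              | false => exact hb
              | true => exact absurd hb htrue
          have hrej : G.obs1 π ∈ G.LrejSet := ⟨π, hπ, rfl, hΩeq⟩
          have : G.obs1 π ∈ RelImage (RelStar (Reflection G.seedRel)) G.LaccSet ∩
              RelImage (RelStar (Reflection G.seedRel)) G.LrejSet :=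
            ⟨hcase, ⟨G.obs1 π, Relation.ReflTransGen.refl, hrej⟩⟩
          rw [hdisj] at this
          exact this
        · simp only [hcase, decide_false]
          rw [hmem false]
          by_contra hfalse
          have hΩeq : G.OmegaP π = {true} := by
            ext a
            rw [hmem a]
            constructor
            · intro ha
              cases a with
              | true => rfl
              | false => exact absurd ha hfalse
            · rintro rfl
              obtain ⟨b, hb⟩ := hΩne
              cases b with
              | true => exact hb
              | false => exact absurd hb hfalse
          have hacc : G.obs1 π ∈ G.LaccSet := ⟨π, hπ, rfl, hΩeq⟩
          exact hcase ⟨G.obs1 π, Relation.ReflTransGen.refl, hacc⟩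
end

section
/- If a consensus game G with seed (R, L_acc, L_rej) and reflection τ = R R⁻¹ is solvable, then over a subalphabet Σ ⊆ Γ, G covers the language (∩Σ*) τ* L_acc; and if additionally (∩Σ*)(τ* L_acc ∪ τ* L_rej) = Σ*, then G characterises (∩Σ*) τ* L_acc. -/
section Helpers

variable {Γ : Type} (G : CGame Γ)

lemma omegaP_nonempty' {π : List G.V} (hπ : G.IsPlay π) : (G.OmegaP π).Nonempty := by
  obtain ⟨hlen, -, -, hfin⟩ := hπ
  have hne : π ≠ [] := by rintro rfl; simp at hlen
  have hv : π.getLast? = some (π.getLast hne) := List.getLast?_eq_getLast hne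
  obtain ⟨a, ha⟩ := G.Ω_ne _ (hfin _ hv)
  exact ⟨a, _, hv, ha⟩

lemma winning_tau_step {t t2 : List Γ → Bool}
    (hw : G.JointWinning (fun π => t (G.obs1 π)) (fun π => t2 (G.obs2 π)))
    {w z : List Γ} (hwz : (w, z) ∈ Reflection G.seedRel) : t w = t z := by
  obtain ⟨y, ⟨π, hπ, hw1, hy1⟩, π', hπ', hz1, hy2⟩ := hwz
  have h1 := (hw.2.2 π hπ).1
  have h2 := (hw.2.2 π' hπ').1
  dsimp only at h1 h2 hw1 hy1 hz1 hy2
  rw [hw1, hz1, h1, h2, ← hy1, ← hy2]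

lemma winning_star_acc {t t2 : List Γ → Bool}
    (hw : G.JointWinning (fun π => t (G.obs1 π)) (fun π => t2 (G.obs2 π)))
    {w : List Γ} (hwA : w ∈ RelImage (RelStar (Reflection G.seedRel)) G.LaccSet) :
    t w = true := by
  obtain ⟨y, hchain, π, hπ, hobs, hΩ⟩ := hwA
  replace hchain : Relation.ReflTransGen (fun x y => (x, y) ∈ Reflection G.seedRel) w y := hchain
  have hbase : t y = true := by
    have h := (hw.2.2 π hπ).2
    dsimp only at h
    rw [hΩ] at h
    rw [← hobs]; exact h
  induction hchain using Relation.ReflTransGen.head_induction_on with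
  | refl => exact hbase
  | head hab _ ih => rw [winning_tau_step G hw hab]; exact ih

lemma winning_star_rej {t t2 : List Γ → Bool}
    (hw : G.JointWinning (fun π => t (G.obs1 π)) (fun π => t2 (G.obs2 π)))
    {w : List Γ} (hwB : w ∈ RelImage (RelStar (Reflection G.seedRel)) G.LrejSet) :
    t w = false := by
  obtain ⟨y, hchain, π, hπ, hobs, hΩ⟩ := hwB
  replace hchain : Relation.ReflTransGen (fun x y => (x, y) ∈ Reflection G.seedRel) w y := hchain
  have hbase : t y = false := by
    have h := (hw.2.2 π hπ).2
    dsimp only at h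
    rw [hΩ] at h
    rw [← hobs]; exact h
  induction hchain using Relation.ReflTransGen.head_induction_on with
  | refl => exact hbase
  | head hab _ ih => rw [winning_tau_step G hw hab]; exact ih

lemma state_tau_step {s1 s2 : List G.V → Bool} (hw : G.JointWinning s1 s2)
    {π π' : List G.V} (hπ : G.IsPlay π) (hπ' : G.IsPlay π')
    (hτ : (G.obs1 π, G.obs1 π') ∈ Reflection G.seedRel) : s1 π = s1 π' := by
  obtain ⟨y, ⟨πa, hπa, ha1, ha2⟩, πb, hπb, hb1, hb2⟩ := hτ
  dsimp only at ha1 ha2 hb1 hb2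
  have e1 : s1 π = s1 πa := hw.1 _ _ ⟨hπ, hπa, ha1⟩
  have e2 : s1 πa = s2 πa := (hw.2.2 _ hπa).1
  have e3 : s2 πa = s2 πb := hw.2.1 _ _ ⟨hπa, hπb, by rw [← ha2, ← hb2]⟩
  have e4 : s2 πb = s1 πb := ((hw.2.2 _ hπb).1).symm
  have e5 : s1 πb = s1 π' := hw.1 _ _ ⟨hπb, hπ', hb1.symm⟩
  exact e1.trans (e2.trans (e3.trans (e4.trans e5)))

lemma state_star_acc {s1 s2 : List G.V → Bool} (hw : G.JointWinning s1 s2)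
    {w : List Γ} (hwA : w ∈ RelImage (RelStar (Reflection G.seedRel)) G.LaccSet) :
    ∀ π, G.IsPlay π → G.obs1 π = w → s1 π = true := by
  obtain ⟨y, hchain, π0, hπ0, hobs0, hΩ0⟩ := hwA
  replace hchain : Relation.ReflTransGen (fun x y => (x, y) ∈ Reflection G.seedRel) w y := hchain
  induction hchain using Relation.ReflTransGen.head_induction_on with
  | refl =>
    intro π hπ hobs
    have e : s1 π = s1 π0 := hw.1 _ _ ⟨hπ, hπ0, by rw [hobs, hobs0]⟩
    have h := (hw.2.2 _ hπ0).2
    rw [hΩ0] at h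
    rw [e]; exact h
  | @head a b hab _ ih =>
    intro π hπ hobs
    obtain ⟨y', hay, πb, hπb, hb1, hb2⟩ := hab
    dsimp only at hb1 hb2
    have hτ : (G.obs1 π, G.obs1 πb) ∈ Reflection G.seedRel := by
      rw [hobs, ← hb1]; exact ⟨y', hay, πb, hπb, hb1, hb2⟩
    rw [state_tau_step G hw hπ hπb hτ]
    exact ih πb hπb hb1.symm

end Helpers

/-- If a game `G` with reflection `τ = R R⁻¹` is solvable,
then over a subalphabet `S ⊆ Γ` it covers `(∩S*) τ* L_acc`; if moreover
`(∩S*)(τ* L_acc ∪ τ* L_rej) = S*`, then `G` characterises `(∩S*) τ* L_acc`. -/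
theorem covers_iterated_image {Γ : Type} (G : CGame Γ) (S : Set Γ)
    (h : G.Solvable) :
    G.Covers S (WordsIn S ∩ RelImage (RelStar (Reflection G.seedRel)) G.LaccSet) ∧
      (WordsIn S ∩
          (RelImage (RelStar (Reflection G.seedRel)) G.LaccSet ∪
           RelImage (RelStar (Reflection G.seedRel)) G.LrejSet) = WordsIn S →
        G.Characterises S
          (WordsIn S ∩ RelImage (RelStar (Reflection G.seedRel)) G.LaccSet)) := by
  classical
  obtain ⟨s1, s2, hw⟩ := h
  set A := RelImage (RelStar (Reflection G.seedRel)) G.LaccSet with hAdef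
  set t : List Γ → Bool := fun w => if w ∈ A then true else false with htdef
  set t2 : List Γ → Bool :=
    fun y => if ∃ π, G.IsPlay π ∧ G.obs2 π = y ∧ G.obs1 π ∈ A then true else false with ht2def
  have ht_iff : ∀ w, t w = true ↔ w ∈ A := by
    intro w; by_cases hmem : w ∈ A <;> simp [htdef, hmem]
  have ht2_iff : ∀ y, t2 y = true ↔ ∃ π, G.IsPlay π ∧ G.obs2 π = y ∧ G.obs1 π ∈ A := by
    intro y
    by_cases hmem : ∃ π, G.IsPlay π ∧ G.obs2 π = y ∧ G.obs1 π ∈ A <;> simp [ht2def, hmem]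
  have hwt : G.JointWinning (fun π => t (G.obs1 π)) (fun π => t2 (G.obs2 π)) := by
    refine ⟨?_, ?_, ?_⟩
    · intro π π' hind; show t (G.obs1 π) = t (G.obs1 π'); rw [hind.2.2]
    · intro π π' hind; show t2 (G.obs2 π) = t2 (G.obs2 π'); rw [hind.2.2]
    · intro π hπ
      have hadm : t (G.obs1 π) ∈ G.OmegaP π := by
        by_cases hmem : G.obs1 π ∈ A
        · have h1 : t (G.obs1 π) = true := (ht_iff _).2 hmem
          have h2 : s1 π = true := state_star_acc G hw hmem π hπ rfl
          rw [h1, ← h2]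
          exact (hw.2.2 π hπ).2
        · have h1 : t (G.obs1 π) = false := by
            simp [htdef, hmem]
          rw [h1]
          by_contra hf
          have hΩ : G.OmegaP π = {true} := by
            ext a
            constructor
            · intro ha
              cases a with
              | false => exact absurd ha hf
              | true => rfl
            · intro ha
              obtain ⟨b, hb⟩ := omegaP_nonempty' G hπ
              cases b with
              | false => exact absurd hb hf
              | true => rw [ha]; exact hb
          exact hmem ⟨G.obs1 π, Relation.ReflTransGen.refl, π, hπ, rfl, hΩ⟩
      constructor
      · by_cases hmem : G.obs1 π ∈ A
        · have h1 : t (G.obs1 π) = true := (ht_iff _).2 hmem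
          have h2 : t2 (G.obs2 π) = true := (ht2_iff _).2 ⟨π, hπ, rfl, hmem⟩
          show t (G.obs1 π) = t2 (G.obs2 π)
          rw [h1, h2]
        · have h1 : t (G.obs1 π) = false := by simp [htdef, hmem]
          have h2 : t2 (G.obs2 π) = false := by
            by_contra hc
            have : t2 (G.obs2 π) = true := by
              cases hh : t2 (G.obs2 π) with
              | false => exact absurd hh hc
              | true => rfl
            obtain ⟨π', hπ', hobs2, hmem'⟩ := (ht2_iff _).1 this
            have hτ : (G.obs1 π, G.obs1 π') ∈ Reflection G.seedRel :=
              ⟨G.obs2 π, ⟨π, hπ, rfl, rfl⟩, π', hπ', rfl, hobs2.symm⟩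
            obtain ⟨y, hchain, hy⟩ := hmem'
            exact hmem ⟨y, Relation.ReflTransGen.head hτ hchain, hy⟩
          show t (G.obs1 π) = t2 (G.obs2 π)
          rw [h1, h2]
      · exact hadm
  constructor
  · refine ⟨⟨s1, s2, hw⟩, ⟨t, ⟨t2, hwt⟩, ?_⟩, ?_⟩
    · intro w hwS
      constructor
      · intro hwL; exact (ht_iff w).2 hwL.2
      · intro htw; exact ⟨hwS, (ht_iff w).1 htw⟩
    · rintro t' ⟨t2', hwt'⟩ w ⟨-, hwA⟩
      exact winning_star_acc G hwt' hwA
  · intro heq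
    refine ⟨⟨s1, s2, hw⟩, ?_⟩
    rintro t' ⟨t2', hwt'⟩ w hwS
    constructor
    · rintro ⟨-, hwA⟩; exact winning_star_acc G hwt' hwA
    · intro htw
      have hmem : w ∈ WordsIn S ∩
          (RelImage (RelStar (Reflection G.seedRel)) G.LaccSet ∪
           RelImage (RelStar (Reflection G.seedRel)) G.LrejSet) := by rw [heq]; exact hwS
      rcases hmem.2 with hA | hB
      · exact ⟨hwS, hA⟩
      · have := winning_star_rej G hwt' hB
        rw [htw] at this
        exact absurd this (by simp)
end
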